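/- arXiv:1903.00139 — 4 statements merged into one kernel-verified Lean document; each statement's English description precedes it below -/
import Mathlib

section
/- Let X be an upward skip-free Markov chain on {-1, 0, 1, ..., a} with -1 and a absorbing, let (λ_i)_{i=0}^{a-1} be the eigenvalues of P restricted to [0, a-1], all real with λ_i < 1. Then the probability generating function of the first hitting time of a started from 0, restricted to paths avoiding -1, is E_0[q^{T_a} 1{T_a < T_{-1}}] = P_0(T_a < T_{-1}) · ∏_{i=0}^{a-1} ((1-λ_i)q/(1-λ_i q)), and P_0(T_a < T_{-1}) = p(0,1)···p(a-1,a)/((1-λ_0)···(1-λ_{a-1})). -/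
open scoped BigOperators
open Polynomial

/-- `avoidHit p a n x = ℙ_x(T_a = n, T_a < T_{-1})` for the chain with kernel `p`,
where `-1` and `a` are absorbing. -/
noncomputable def avoidHit (p : ℤ → ℤ → ℝ) (a : ℤ) : ℕ → ℤ → ℝ
  | 0, x => if x = a then 1 else 0
  | n + 1, x => if x = a ∨ x = -1 then 0 else ∑' z : ℤ, p x z * avoidHit p a n z


lemma avoidHit_neg_one (p : ℤ → ℤ → ℝ) (a : ℕ) (ha : 0 < a) (n : ℕ) :
    avoidHit p a n (-1) = 0 := by
  cases n with
  | zero =>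
      have : (-1 : ℤ) ≠ (a : ℤ) := by omega
      simp [avoidHit, this]
  | succ n => simp [avoidHit]

lemma avoidHit_top (p : ℤ → ℤ → ℝ) (a : ℕ) (n : ℕ) :
    avoidHit p a n a = if n = 0 then 1 else 0 := by
  cases n with
  | zero => simp [avoidHit]
  | succ n => simp [avoidHit]

lemma avoidHit_nonneg (p : ℤ → ℤ → ℝ) (a : ℕ) (hnn : ∀ x y, 0 ≤ p x y) :
    ∀ n x, 0 ≤ avoidHit p a n x := by
  intro n
  induction n with
  | zero => intro x; simp only [avoidHit]; split <;> norm_num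
  | succ n ih =>
      intro x
      simp only [avoidHit]
      split
      · exact le_refl 0
      exact tsum_nonneg fun z => mul_nonneg (hnn x z) (ih z)

lemma Icc_split (a : ℕ) (ha : 0 < a) (f : ℤ → ℝ) :
    ∑ z ∈ Finset.Icc (-1 : ℤ) (a : ℤ), f z
      = f (-1) + (∑ k : Fin a, f k) + f a := by
  have h1 : Finset.Icc (-1 : ℤ) (a : ℤ)
      = insert (-1 : ℤ) ((Finset.range (a+1)).image (Nat.cast : ℕ → ℤ)) := by
    ext z
    simp only [Finset.mem_Icc, Finset.mem_insert, Finset.mem_image, Finset.mem_range]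
    constructor
    · intro ⟨h1, h2⟩
      rcases eq_or_lt_of_le h1 with h | h
      · exact Or.inl h.symm
      · refine Or.inr ⟨z.toNat, by omega, by omega⟩
    · rintro (rfl | ⟨m, hm, rfl⟩) <;> omega
  rw [h1, Finset.sum_insert (by simp), Finset.sum_image (by
    intro x _ y _ h; exact_mod_cast h)]
  rw [Finset.sum_range_succ, Fin.sum_univ_eq_sum_range (fun i => f (i : ℤ)) a]
  ring

lemma avoidHit_step (p : ℤ → ℤ → ℝ) (a : ℕ) (ha : 0 < a)
    (hsupp : ∀ x y : ℤ, p x y ≠ 0 → -1 ≤ y ∧ y ≤ (a : ℤ))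
    (x : ℤ) (hx : ¬(x = (a : ℤ) ∨ x = -1)) (n : ℕ) :
    avoidHit p a (n+1) x
      = (∑ k : Fin a, p x k * avoidHit p a n k)
          + p x a * (if n = 0 then 1 else 0) := by
  have h0 : avoidHit p a (n+1) x = ∑' z : ℤ, p x z * avoidHit p a n z := by
    simp only [avoidHit]; rw [if_neg hx]
  have hsup : ∀ z ∉ Finset.Icc (-1 : ℤ) (a : ℤ), p x z * avoidHit p a n z = 0 := by
    intro z hz
    have : p x z = 0 := by
      by_contra hp
      exact hz (Finset.mem_Icc.mpr (hsupp x z hp))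
    simp [this]
  rw [h0, tsum_eq_sum hsup, Icc_split a ha, avoidHit_neg_one p a ha, avoidHit_top]
  ring

lemma sum_avoidHit_le_one (p : ℤ → ℤ → ℝ) (a : ℕ) (ha : 0 < a)
    (hnn : ∀ x y, 0 ≤ p x y)
    (hrow : ∀ x : ℤ, -1 ≤ x → x ≤ (a : ℤ) → ∑' y : ℤ, p x y = 1)
    (hsupp : ∀ x y : ℤ, p x y ≠ 0 → -1 ≤ y ∧ y ≤ (a : ℤ)) :
    ∀ N, ∀ x : ℤ, -1 ≤ x → x ≤ (a : ℤ) →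
      ∑ n ∈ Finset.range N, avoidHit p a n x ≤ 1 := by
  intro N
  induction N with
  | zero => intro x _ _; simp
  | succ N ih =>
      intro x hx1 hx2
      rw [Finset.sum_range_succ']
      by_cases hx : x = (a : ℤ) ∨ x = -1
      · have hz : ∀ n, avoidHit p a (n+1) x = 0 := by
          intro n; simp only [avoidHit]; rw [if_pos hx]
        simp only [hz, Finset.sum_const, smul_zero, zero_add]
        simp only [avoidHit]
        split <;> norm_num
      · have h00 : avoidHit p a 0 x = 0 := by
          simp only [avoidHit]
          rw [if_neg (by tauto)]
        rw [h00, add_zero]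
        have e1 : ∑ n ∈ Finset.range N, avoidHit p a (n+1) x
            = (∑ k : Fin a, p x k * (∑ n ∈ Finset.range N, avoidHit p a n k))
              + p x a * ∑ n ∈ Finset.range N, (if n = 0 then (1:ℝ) else 0) := by
          simp only [avoidHit_step p a ha hsupp x hx]
          rw [Finset.sum_add_distrib, Finset.sum_comm, ← Finset.mul_sum]
          congr 1
          exact Finset.sum_congr rfl fun k _ => (Finset.mul_sum _ _ _).symm
        rw [e1]
        have hb : ∀ k : Fin a, ∑ n ∈ Finset.range N, avoidHit p a n (k : ℤ) ≤ 1 := by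
          intro k
          exact ih _ (by omega) (by exact_mod_cast le_of_lt (Int.ofNat_lt.mpr k.isLt))
        have hind : ∑ n ∈ Finset.range N, (if n = 0 then (1:ℝ) else 0) ≤ 1 := by
          rw [Finset.sum_ite_eq' (Finset.range N) 0 (fun _ => (1:ℝ))]
          split <;> norm_num
        have hsup : ∀ z ∉ Finset.Icc (-1 : ℤ) (a : ℤ), p x z = 0 := by
          intro z hz
          by_contra hp
          exact hz (Finset.mem_Icc.mpr (hsupp x z hp))
        calc (∑ k : Fin a, p x k * (∑ n ∈ Finset.range N, avoidHit p a n k))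
              + p x a * ∑ n ∈ Finset.range N, (if n = 0 then (1:ℝ) else 0)
            ≤ (∑ k : Fin a, p x k * 1) + p x a * 1 := by
              refine add_le_add (Finset.sum_le_sum fun k _ => ?_)
                (mul_le_mul_of_nonneg_left hind (hnn _ _))
              exact mul_le_mul_of_nonneg_left (hb k) (hnn _ _)
          _ ≤ p x (-1) + ((∑ k : Fin a, p x k) + p x a) := by
              simp only [mul_one]
              have := hnn x (-1)
              linarith
          _ = ∑ z ∈ Finset.Icc (-1 : ℤ) (a : ℤ), p x z := by
              rw [Icc_split a ha (fun z => p x z)]; ring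
          _ = ∑' z : ℤ, p x z := (tsum_eq_sum hsup).symm
          _ = 1 := hrow x hx1 hx2

lemma summable_pow_avoidHit (p : ℤ → ℤ → ℝ) (a : ℕ) (ha : 0 < a)
    (hnn : ∀ x y, 0 ≤ p x y)
    (hrow : ∀ x : ℤ, -1 ≤ x → x ≤ (a : ℤ) → ∑' y : ℤ, p x y = 1)
    (hsupp : ∀ x y : ℤ, p x y ≠ 0 → -1 ≤ y ∧ y ≤ (a : ℤ))
    (q : ℝ) (hq0 : 0 ≤ q) (hq1 : q ≤ 1)
    (x : ℤ) (hx1 : -1 ≤ x) (hx2 : x ≤ (a : ℤ)) :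
    Summable (fun n => q ^ n * avoidHit p a n x) := by
  apply summable_of_sum_range_le
    (fun n => mul_nonneg (pow_nonneg hq0 n) (avoidHit_nonneg p a hnn n x))
  intro N
  calc ∑ n ∈ Finset.range N, q ^ n * avoidHit p a n x
      ≤ ∑ n ∈ Finset.range N, avoidHit p a n x := by
        refine Finset.sum_le_sum fun n _ => ?_
        have : q ^ n * avoidHit p a n x ≤ 1 * avoidHit p a n x :=
          mul_le_mul_of_nonneg_right (pow_le_one₀ hq0 hq1) (avoidHit_nonneg p a hnn n x)
        simpa using this
    _ ≤ 1 := sum_avoidHit_le_one p a ha hnn hrow hsupp N x hx1 hx2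

lemma u_functional (p : ℤ → ℤ → ℝ) (a : ℕ) (ha : 0 < a)
    (hnn : ∀ x y, 0 ≤ p x y)
    (hrow : ∀ x : ℤ, -1 ≤ x → x ≤ (a : ℤ) → ∑' y : ℤ, p x y = 1)
    (hsupp : ∀ x y : ℤ, p x y ≠ 0 → -1 ≤ y ∧ y ≤ (a : ℤ))
    (q : ℝ) (hq0 : 0 ≤ q) (hq1 : q ≤ 1) (j : Fin a) :
    (∑' n : ℕ, q ^ n * avoidHit p a n (j : ℤ))
      = q * (∑ k : Fin a, p (j : ℤ) (k : ℤ) * ∑' n : ℕ, q ^ n * avoidHit p a n (k : ℤ))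
          + q * p (j : ℤ) (a : ℤ) := by
  have hmem : ∀ k : Fin a, (-1 : ℤ) ≤ (k : ℤ) ∧ (k : ℤ) ≤ (a : ℤ) := by
    intro k
    have := k.isLt
    constructor <;> [omega; exact_mod_cast le_of_lt (Int.ofNat_lt.mpr k.isLt)]
  have hsum : ∀ k : Fin a, Summable (fun n => q ^ n * avoidHit p a n (k : ℤ)) :=
    fun k => summable_pow_avoidHit p a ha hnn hrow hsupp q hq0 hq1 _ (hmem k).1 (hmem k).2
  have hj : ¬((j : ℤ) = (a : ℤ) ∨ (j : ℤ) = -1) := by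
    have := j.isLt
    push_neg
    constructor <;> omega
  have h00 : avoidHit p a 0 (j : ℤ) = 0 := by
    simp only [avoidHit]
    rw [if_neg (by tauto)]
  rw [(hsum j).tsum_eq_zero_add, pow_zero, h00, mul_zero, zero_add]
  have e : ∀ n : ℕ, q ^ (n + 1) * avoidHit p a (n + 1) (j : ℤ)
      = (∑ k : Fin a, p (j : ℤ) (k : ℤ) * q * (q ^ n * avoidHit p a n (k : ℤ)))
          + (if n = 0 then q * p (j : ℤ) (a : ℤ) else 0) := by
    intro n
    rw [avoidHit_step p a ha hsupp (j : ℤ) hj n, mul_add, Finset.mul_sum]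
    congr 1
    · exact Finset.sum_congr rfl fun k _ => by ring
    · split <;> simp_all <;> ring
  simp only [e]
  have hsumm1 : Summable (fun n => ∑ k : Fin a,
      p (j : ℤ) (k : ℤ) * q * (q ^ n * avoidHit p a n (k : ℤ))) :=
    summable_sum fun k _ => (hsum k).mul_left _
  have hsumm2 : Summable (fun n => (if n = 0 then q * p (j : ℤ) (a : ℤ) else 0)) := by
    apply summable_of_ne_finset_zero (s := {0})
    intro n hn
    simp only [Finset.mem_singleton] at hn
    rw [if_neg hn]
  rw [hsumm1.tsum_add hsumm2, Summable.tsum_finsetSum (fun k _ => (hsum k).mul_left _),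
    tsum_eq_single 0 (by intro n hn; rw [if_neg hn]), if_pos rfl, Finset.mul_sum]
  congr 1
  refine Finset.sum_congr rfl fun k _ => ?_
  rw [tsum_mul_left]
  ring

lemma charpoly_eval_det {m : ℕ} (M : Matrix (Fin m) (Fin m) ℝ) (t : ℝ) :
    M.charpoly.eval t = (t • (1 : Matrix (Fin m) (Fin m) ℝ) - M).det := by
  rw [Matrix.charpoly, ← Polynomial.coe_evalRingHom, RingHom.map_det]
  congr 1
  ext i j
  by_cases h : i = j
  · subst h
    simp [Matrix.charmatrix_apply_eq, Matrix.sub_apply, Matrix.smul_apply, Matrix.one_apply]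
  · simp [Matrix.charmatrix_apply_ne _ _ _ h, Matrix.sub_apply, Matrix.smul_apply,
      Matrix.one_apply, h]

lemma detA_eq {n : ℕ} (M : Matrix (Fin (n+1)) (Fin (n+1)) ℝ) (lam : Fin (n+1) → ℝ)
    (hchar : M.charpoly = ∏ i, (X - Polynomial.C (lam i)))
    (q : ℝ) (hq0 : 0 < q) :
    ((1 : Matrix (Fin (n+1)) (Fin (n+1)) ℝ) - q • M).det = ∏ i, (1 - lam i * q) := by
  have hq : q ≠ 0 := ne_of_gt hq0
  have h1 : (1 : Matrix (Fin (n+1)) (Fin (n+1)) ℝ) - q • M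
      = q • (q⁻¹ • (1 : Matrix (Fin (n+1)) (Fin (n+1)) ℝ) - M) := by
    rw [smul_sub, smul_smul, mul_inv_cancel₀ hq, one_smul]
  rw [h1, Matrix.det_smul, ← charpoly_eval_det, hchar]
  rw [Polynomial.eval_prod]
  simp only [Polynomial.eval_sub, Polynomial.eval_X, Polynomial.eval_C]
  rw [Fintype.card_fin, show (q : ℝ) ^ (n+1) = ∏ _i : Fin (n+1), q by
    rw [Finset.prod_const, Finset.card_univ, Fintype.card_fin], ← Finset.prod_mul_distrib]
  refine Finset.prod_congr rfl fun i _ => ?_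
  field_simp

lemma detB_eq {n : ℕ} (p : ℤ → ℤ → ℝ)
    (hskip : ∀ x y : ℤ, x + 2 ≤ y → p x y = 0)
    (M : Matrix (Fin (n+1)) (Fin (n+1)) ℝ)
    (hM : ∀ i j : Fin (n+1), M i j = p ((i : ℕ) : ℤ) ((j : ℕ) : ℤ))
    (q : ℝ) :
    (((1 : Matrix (Fin (n+1)) (Fin (n+1)) ℝ) - q • M).updateCol 0
        (fun k => q * p ((k : ℕ) : ℤ) ((n : ℤ) + 1))).det
      = q ^ (n+1) * ∏ i : Fin (n+1), p ((i : ℕ) : ℤ) (((i : ℕ) : ℤ) + 1) := by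
  set A : Matrix (Fin (n+1)) (Fin (n+1)) ℝ := (1 : Matrix (Fin (n+1)) (Fin (n+1)) ℝ) - q • M
  set B : Matrix (Fin (n+1)) (Fin (n+1)) ℝ :=
    A.updateCol 0 (fun k => q * p ((k : ℕ) : ℤ) ((n : ℤ) + 1)) with hB
  set σ : Equiv.Perm (Fin (n+1)) := finRotate (n+1) with hσ
  set C : Matrix (Fin (n+1)) (Fin (n+1)) ℝ := B.submatrix id σ with hC
  have hCapp : ∀ i j : Fin (n+1), C i j =
      if σ j = 0 then q * p ((i : ℕ) : ℤ) ((n : ℤ) + 1)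
      else (if i = σ j then 1 else 0) - q * M i (σ j) := by
    intro i j
    simp [hC, hB, Matrix.submatrix_apply, Matrix.updateCol_apply, A,
      Matrix.sub_apply, Matrix.smul_apply, Matrix.one_apply]
  have hσapp : ∀ j : Fin (n+1), σ j = j + 1 := fun j => finRotate_succ_apply j
  -- lower triangularity
  have hlt : ∀ i j : Fin (n+1), i < j → C i j = 0 := by
    intro i j hij
    rw [hCapp]
    by_cases hj : j = Fin.last n
    · subst hj
      rw [hσapp, Fin.last_add_one, if_pos rfl]
      have hp : p ((i : ℕ) : ℤ) ((n : ℤ) + 1) = 0 := by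
        apply hskip
        have : (i : ℕ) < n := by
          have := hij
          simp [Fin.lt_iff_val_lt_val, Fin.val_last] at this
          omega
        push_cast
        omega
      simp [hp]
    · have hjlt : j < Fin.last n := lt_of_le_of_ne (Fin.le_last j) hj
      have hval : ((j + 1 : Fin (n+1)) : ℕ) = (j : ℕ) + 1 := Fin.val_add_one_of_lt hjlt
      have hne0 : σ j ≠ 0 := by
        rw [hσapp]
        intro h
        rw [Fin.ext_iff] at h
        simp [hval] at h
      rw [if_neg hne0]
      have hine : i ≠ σ j := by
        rw [hσapp]
        intro h
        rw [Fin.ext_iff] at h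
        rw [hval] at h
        have := Fin.lt_iff_val_lt_val.mp hij
        omega
      rw [if_neg hine, hM]
      have hp : p ((i : ℕ) : ℤ) (((σ j : Fin (n+1)) : ℕ) : ℤ) = 0 := by
        apply hskip
        rw [hσapp, hval]
        have := Fin.lt_iff_val_lt_val.mp hij
        push_cast
        omega
      rw [hp]
      ring
  -- diagonal entries
  have hdiag : ∀ i : Fin (n+1), C i i =
      (if i = Fin.last n then q else -q) * p ((i : ℕ) : ℤ) (((i : ℕ) : ℤ) + 1) := by
    intro i
    rw [hCapp]
    by_cases hi : i = Fin.last n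
    · subst hi
      rw [hσapp, Fin.last_add_one, if_pos rfl, if_pos rfl]
      simp [Fin.val_last]
    · have hilt : i < Fin.last n := lt_of_le_of_ne (Fin.le_last i) hi
      have hval : ((i + 1 : Fin (n+1)) : ℕ) = (i : ℕ) + 1 := Fin.val_add_one_of_lt hilt
      have hne0 : σ i ≠ 0 := by
        rw [hσapp]
        intro h
        rw [Fin.ext_iff] at h
        simp [hval] at h
      rw [if_neg hne0]
      have hine : i ≠ σ i := by
        rw [hσapp]
        intro h
        rw [Fin.ext_iff, hval] at h
        omega
      rw [if_neg hine, if_neg hi, hM, hσapp, hval]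
      push_cast
      ring
  -- determinant of C
  have hCtri : C.BlockTriangular OrderDual.toDual := by
    intro i j h
    exact hlt i j (by simpa using h)
  have hdetC : C.det = (-1 : ℝ) ^ n * (q ^ (n+1) * ∏ i : Fin (n+1), p ((i : ℕ) : ℤ) (((i : ℕ) : ℤ) + 1)) := by
    rw [Matrix.det_of_lowerTriangular C hCtri]
    calc ∏ i : Fin (n+1), C i i
        = ∏ i : Fin (n+1), ((if i = Fin.last n then q else -q)
            * p ((i : ℕ) : ℤ) (((i : ℕ) : ℤ) + 1)) := Finset.prod_congr rfl fun i _ => hdiag i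
      _ = (∏ i : Fin (n+1), (if i = Fin.last n then q else -q))
            * ∏ i : Fin (n+1), p ((i : ℕ) : ℤ) (((i : ℕ) : ℤ) + 1) := Finset.prod_mul_distrib
      _ = (q * (-q) ^ n) * ∏ i : Fin (n+1), p ((i : ℕ) : ℤ) (((i : ℕ) : ℤ) + 1) := by
          congr 1
          rw [Fintype.prod_eq_mul_prod_compl (Fin.last n), if_pos rfl]
          congr 1
          rw [Finset.prod_congr rfl (fun i hi => by
            rw [if_neg (by simpa using (Finset.mem_compl.mp hi))]), Finset.prod_const]
          congr 1
          simp [Finset.card_compl, Fintype.card_fin]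
      _ = (-1 : ℝ) ^ n * (q ^ (n+1) * ∏ i : Fin (n+1), p ((i : ℕ) : ℤ) (((i : ℕ) : ℤ) + 1)) := by
          rw [neg_pow]
          ring
  -- relate det B and det C
  have hperm : C.det = ((Equiv.Perm.sign σ : ℤ) : ℝ) * B.det := by
    rw [hC]
    exact_mod_cast Matrix.det_permute' σ B
  have hsign : ((Equiv.Perm.sign σ : ℤ) : ℝ) = (-1 : ℝ) ^ n := by
    rw [hσ, sign_finRotate]
    push_cast
    ring
  rw [hsign] at hperm
  have hsq : ((-1 : ℝ) ^ n) * ((-1 : ℝ) ^ n) = 1 := by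
    rw [← pow_add]
    exact Even.neg_one_pow ⟨n, rfl⟩
  calc B.det = ((-1 : ℝ) ^ n * (-1 : ℝ) ^ n) * B.det := by rw [hsq, one_mul]
    _ = (-1 : ℝ) ^ n * C.det := by rw [mul_assoc, ← hperm]
    _ = q ^ (n+1) * ∏ i : Fin (n+1), p ((i : ℕ) : ℤ) (((i : ℕ) : ℤ) + 1) := by
        rw [hdetC, ← mul_assoc, hsq, one_mul]
open scoped BigOperators
open Polynomial Matrix

lemma one_sub_lam_q_pos {lam : ℝ} (hlam : lam < 1) {q : ℝ} (hq0 : 0 < q) (hq1 : q ≤ 1) :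
    0 < 1 - lam * q := by
  nlinarith [mul_pos hq0 (sub_pos.mpr hlam)]

lemma main_formula (n : ℕ) (p : ℤ → ℤ → ℝ)
    (hnn : ∀ x y, 0 ≤ p x y)
    (hrow : ∀ x : ℤ, -1 ≤ x → x ≤ ((n+1 : ℕ) : ℤ) → ∑' y : ℤ, p x y = 1)
    (hsupp : ∀ x y : ℤ, p x y ≠ 0 → -1 ≤ y ∧ y ≤ ((n+1 : ℕ) : ℤ))
    (hskip : ∀ x y : ℤ, x + 2 ≤ y → p x y = 0)
    (lam : Fin (n+1) → ℝ) (hlam : ∀ i, lam i < 1)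
    (M : Matrix (Fin (n+1)) (Fin (n+1)) ℝ)
    (hM : ∀ i j : Fin (n+1), M i j = p ((i : ℕ) : ℤ) ((j : ℕ) : ℤ))
    (hchar : M.charpoly = ∏ i, (X - Polynomial.C (lam i)))
    (q : ℝ) (hq0 : 0 < q) (hq1 : q ≤ 1) :
    (∑' m : ℕ, q ^ m * avoidHit p (n+1) m 0)
      = q ^ (n+1) * (∏ i : Fin (n+1), p ((i : ℕ) : ℤ) (((i : ℕ) : ℤ) + 1))
          / ∏ i, (1 - lam i * q) := by
  have ha : 0 < n + 1 := Nat.succ_pos n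
  set u : Fin (n+1) → ℝ := fun j => ∑' m : ℕ, q ^ m * avoidHit p (n+1) m ((j : ℕ) : ℤ)
    with hu_def
  set A : Matrix (Fin (n+1)) (Fin (n+1)) ℝ := (1 : Matrix (Fin (n+1)) (Fin (n+1)) ℝ) - q • M
    with hA_def
  set b : Fin (n+1) → ℝ := fun k => q * p ((k : ℕ) : ℤ) ((n : ℤ) + 1) with hb_def
  have hu : ∀ j : Fin (n+1), u j
      = q * (∑ k : Fin (n+1), p ((j : ℕ) : ℤ) ((k : ℕ) : ℤ) * u k)
          + q * p ((j : ℕ) : ℤ) ((n+1 : ℕ) : ℤ) :=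
    fun j => u_functional p (n+1) ha hnn hrow hsupp q hq0.le hq1 j
  have hA : A *ᵥ u = b := by
    funext j
    have h1 : (A *ᵥ u) j = u j - q * ∑ k : Fin (n+1), M j k * u k := by
      simp only [hA_def, Matrix.mulVec, dotProduct, Matrix.sub_apply,
        Matrix.smul_apply, Matrix.one_apply, smul_eq_mul, sub_mul]
      rw [Finset.sum_sub_distrib]
      congr 1
      · simp [ite_mul]
      · rw [Finset.mul_sum]
        exact Finset.sum_congr rfl fun k _ => by ring
    rw [h1, hu j]
    simp only [hM, hb_def]
    push_cast
    ring
  have hpos : ∀ i, 0 < 1 - lam i * q := fun i => one_sub_lam_q_pos (hlam i) hq0 hq1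
  have hdetA : A.det = ∏ i, (1 - lam i * q) := detA_eq M lam hchar q hq0
  have hdet0 : A.det ≠ 0 := by
    rw [hdetA]
    exact ne_of_gt (Finset.prod_pos fun i _ => hpos i)
  have hinv : A⁻¹ * A = 1 := Matrix.nonsing_inv_mul A (isUnit_iff_ne_zero.mpr hdet0)
  have hu0 : u = A⁻¹ *ᵥ b := by
    rw [← hA, Matrix.mulVec_mulVec, hinv, Matrix.one_mulVec]
  have hcr : A⁻¹ *ᵥ b = A.det⁻¹ • (Matrix.cramer A b) := by
    rw [Matrix.cramer_eq_adjugate_mulVec, Matrix.inv_def, Matrix.smul_mulVec]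
    congr 1
    simp [Ring.inverse_eq_inv']
  have hlhs : (∑' m : ℕ, q ^ m * avoidHit p (n+1) m 0) = u 0 := by
    rw [hu_def]
    norm_num
  rw [hlhs, hu0, hcr]
  simp only [Pi.smul_apply, smul_eq_mul, Matrix.cramer_apply]
  rw [hdetA]
  have hdetB := detB_eq p hskip M hM q
  rw [hdetB]
  rw [div_eq_inv_mul]

/-- Fill's formula (extended to substochastic matrices) : for an upward skip-free chain on
`{-1, 0, …, a}` with `-1` and `a` absorbing and `(λ_i)` the eigenvalues of `P` restricted to
`[0, a-1]`, `𝔼_0[q^{T_a} 1_{T_a < T_{-1}}] = ℙ_0(T_a < T_{-1}) ∏_i (1-λ_i)q/(1-λ_i q)` and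
`ℙ_0(T_a < T_{-1}) = p(0,1)⋯p(a-1,a) / ((1-λ_0)⋯(1-λ_{a-1}))`. -/
theorem skipfree_upward_hitting_eigen
    (a : ℕ) (ha : 0 < a) (p : ℤ → ℤ → ℝ)
    (hnn : ∀ x y, 0 ≤ p x y)
    (hrow : ∀ x : ℤ, -1 ≤ x → x ≤ (a : ℤ) → ∑' y : ℤ, p x y = 1)
    (hsupp : ∀ x y : ℤ, p x y ≠ 0 → -1 ≤ y ∧ y ≤ (a : ℤ))
    (hup : ∀ x : ℤ, 0 ≤ x → x < (a : ℤ) → 0 < p x (x + 1))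
    (hskip : ∀ x y : ℤ, x + 2 ≤ y → p x y = 0)
    (habs1 : p (-1) (-1) = 1) (habs2 : p a a = 1)
    (lam : Fin a → ℝ) (hlam : ∀ i, lam i < 1)
    (M : Matrix (Fin a) (Fin a) ℝ)
    (hM : ∀ i j : Fin a, M i j = p ((i : ℕ) : ℤ) ((j : ℕ) : ℤ))
    (hchar : M.charpoly = ∏ i, (X - Polynomial.C (lam i)))
    (q : ℝ) (hq : q ∈ Set.Ioo (0 : ℝ) 1) :
    (∑' n : ℕ, q ^ n * avoidHit p a n 0)
        = (∑' n : ℕ, avoidHit p a n 0) * ∏ i, ((1 - lam i) * q / (1 - lam i * q)) ∧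
      (∑' n : ℕ, avoidHit p a n 0)
        = (∏ i : Fin a, p ((i : ℕ) : ℤ) (((i : ℕ) : ℤ) + 1)) / ∏ i, (1 - lam i) := by
  obtain ⟨n, rfl⟩ : ∃ n, a = n + 1 := ⟨a - 1, by omega⟩
  have h1 := main_formula n p hnn hrow hsupp hskip lam hlam M hM hchar q hq.1 hq.2.le
  have h2 := main_formula n p hnn hrow hsupp hskip lam hlam M hM hchar 1 one_pos le_rfl
  simp only [one_pow, one_mul, mul_one] at h2
  have hgoal2 : (∑' m : ℕ, avoidHit p ((n+1 : ℕ) : ℤ) m 0)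
      = (∏ i : Fin (n+1), p ((i : ℕ) : ℤ) (((i : ℕ) : ℤ) + 1)) / ∏ i, (1 - lam i) := by
    push_cast
    push_cast at h2
    exact h2
  refine ⟨?_, hgoal2⟩
  have hD1 : (∏ i : Fin (n+1), (1 - lam i)) ≠ 0 :=
    ne_of_gt (Finset.prod_pos fun i _ => sub_pos.mpr (hlam i))
  have hDq : (∏ i : Fin (n+1), (1 - lam i * q)) ≠ 0 :=
    ne_of_gt (Finset.prod_pos fun i _ => one_sub_lam_q_pos (hlam i) hq.1 hq.2.le)
  have h1' : (∑' m : ℕ, q ^ m * avoidHit p ((n+1 : ℕ) : ℤ) m 0)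
      = q ^ (n+1) * (∏ i : Fin (n+1), p ((i : ℕ) : ℤ) (((i : ℕ) : ℤ) + 1))
          / ∏ i, (1 - lam i * q) := by
    push_cast
    push_cast at h1
    exact h1
  rw [h1', hgoal2]
  rw [show (∏ i : Fin (n+1), ((1 - lam i) * q / (1 - lam i * q)))
      = (∏ i : Fin (n+1), ((1 - lam i) * q)) / ∏ i, (1 - lam i * q) from
    Finset.prod_div_distrib _ _]
  rw [Finset.prod_mul_distrib, Finset.prod_const, Finset.card_univ, Fintype.card_fin]
  field_simp
  have hDq' : (∏ x : Fin (n+1), (1 - q * lam x)) ≠ 0 := by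
    simp_rw [mul_comm q]; exact hDq
  ring_nf
  rw [mul_inv_cancel_right₀ hDq']
end

section
/- Let P be a finite stochastic matrix that is similar to a birth-death transition matrix Q via PΛ = ΛQ with Λ invertible, and suppose P is normal with respect to the π-inner product (P P̂ = P̂ P where P̂ is the π-adjoint). Then P is self-adjoint: P = P̂. -/
open scoped BigOperators

/-- A birth-death transition matrix : stochastic, tridiagonal, with positive
off-diagonal entries. -/
def IsBirthDeath {n : ℕ} (Q : Matrix (Fin n) (Fin n) ℝ) : Prop :=
  (∀ i j, 0 ≤ Q i j) ∧ (∀ i, ∑ j, Q i j = 1) ∧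
    (∀ i j : Fin n, 2 ≤ |(i : ℤ) - (j : ℤ)| → Q i j = 0) ∧
    (∀ i j : Fin n, |(i : ℤ) - (j : ℤ)| = 1 → 0 < Q i j)


/-- Key lemma: if `Phat` is the π-adjoint of `P`, they commute, and `m` is an eigenvector of
`P` with real eigenvalue `lam`, then `m` is also an eigenvector of `Phat` with the same
eigenvalue. -/
lemma phat_mulVec_eig {n : ℕ} (P Phat : Matrix (Fin n) (Fin n) ℝ) (π : Fin n → ℝ)
    (hπ : ∀ i, 0 < π i)
    (hPhat : Phat = Matrix.of fun x y => π y * P y x / π x)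
    (hnormal : P * Phat = Phat * P)
    (lam : ℝ) (m : Fin n → ℝ) (hm : P.mulVec m = lam • m) :
    Phat.mulVec m = lam • m := by
  set w : Fin n → ℝ := Phat.mulVec m - lam • m with hw
  have hPw : P.mulVec w = lam • w := by
    have h1 : P.mulVec (Phat.mulVec m) = lam • (Phat.mulVec m) := by
      rw [Matrix.mulVec_mulVec, hnormal, ← Matrix.mulVec_mulVec, hm, Matrix.mulVec_smul]
    rw [hw, Matrix.mulVec_sub, h1, Matrix.mulVec_smul, hm, smul_sub, smul_comm]
  have adj : ∀ u v : Fin n → ℝ,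
      ∑ i, π i * (Phat.mulVec u) i * v i = ∑ i, π i * u i * (P.mulVec v) i := by
    intro u v
    have lhs : ∑ i, π i * (Phat.mulVec u) i * v i
        = ∑ i, ∑ j, π j * P j i * u j * v i := by
      apply Finset.sum_congr rfl; intro i _
      rw [Matrix.mulVec, dotProduct, Finset.mul_sum, Finset.sum_mul]
      apply Finset.sum_congr rfl; intro j _
      rw [hPhat]
      simp only [Matrix.of_apply]
      have hne : π i ≠ 0 := (hπ i).ne'
      calc π i * (π j * P j i / π i * u j) * v i
          = (π i / π i) * (π j * P j i * u j * v i) := by ring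
        _ = π j * P j i * u j * v i := by rw [div_self hne, one_mul]
    rw [lhs, Finset.sum_comm]
    apply Finset.sum_congr rfl; intro i _
    rw [Matrix.mulVec, dotProduct, Finset.mul_sum]
    apply Finset.sum_congr rfl; intro j _
    ring
  have hzero : ∑ i, π i * w i * w i = 0 := by
    have h1 : ∑ i, π i * (Phat.mulVec m) i * w i = ∑ i, π i * m i * (P.mulVec w) i := adj m w
    have e1 : ∀ i, π i * w i * w i
        = π i * (Phat.mulVec m) i * w i - lam * (π i * m i * w i) := by
      intro i
      simp only [hw, Pi.sub_apply, Pi.smul_apply, smul_eq_mul]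
      ring
    have e2 : ∀ i, π i * m i * (P.mulVec w) i = lam * (π i * m i * w i) := by
      intro i
      rw [hPw]
      simp only [Pi.smul_apply, smul_eq_mul]
      ring
    calc ∑ i, π i * w i * w i
        = ∑ i, (π i * (Phat.mulVec m) i * w i - lam * (π i * m i * w i)) := by
          exact Finset.sum_congr rfl fun i _ => e1 i
      _ = (∑ i, π i * (Phat.mulVec m) i * w i) - lam * ∑ i, π i * m i * w i := by
          rw [Finset.sum_sub_distrib, Finset.mul_sum]
      _ = (∑ i, π i * m i * (P.mulVec w) i) - lam * ∑ i, π i * m i * w i := by rw [h1]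
      _ = 0 := by
          rw [Finset.sum_congr rfl fun i _ => e2 i, ← Finset.mul_sum]
          ring
  have hwz : ∀ i, w i = 0 := by
    intro i
    have hnn : ∀ j ∈ Finset.univ, (0:ℝ) ≤ π j * w j * w j := by
      intro j _
      have := (hπ j).le
      nlinarith [sq_nonneg (w j)]
    have h0 := (Finset.sum_eq_zero_iff_of_nonneg hnn).mp hzero i (Finset.mem_univ i)
    rw [mul_assoc] at h0
    rcases mul_eq_zero.mp h0 with h | h
    · exact absurd h (hπ i).ne'
    · exact mul_self_eq_zero.mp h
  funext i
  have := hwz i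
  simp only [hw, Pi.sub_apply, Pi.smul_apply, smul_eq_mul] at this
  simp only [Pi.smul_apply, smul_eq_mul]
  linarith


/-- A stochastic matrix similar to a (reversible) birth-death matrix which is moreover
normal with respect to the `π`-inner product must be self-adjoint : `P = P̂`. -/
theorem normal_similar_birthdeath_selfadjoint (n : ℕ)
    (P Q Λ : Matrix (Fin n) (Fin n) ℝ) (π πQ : Fin n → ℝ)
    (hPnn : ∀ i j, 0 ≤ P i j) (hProw : ∀ i, ∑ j, P i j = 1)
    (hπ : ∀ i, 0 < π i) (hπQ : ∀ i, 0 < πQ i)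
    (hBD : IsBirthDeath Q)
    (hrevQ : ∀ i j, πQ i * Q i j = πQ j * Q j i)
    (hΛ : IsUnit Λ) (hint : P * Λ = Λ * Q)
    (Phat : Matrix (Fin n) (Fin n) ℝ)
    (hPhat : Phat = Matrix.of fun x y => π y * P y x / π x)
    (hnormal : P * Phat = Phat * P) :
    P = Phat := by
  classical
  set s : Fin n → ℝ := fun i => Real.sqrt (πQ i) with hs
  have hspos : ∀ i, 0 < s i := fun i => Real.sqrt_pos.mpr (hπQ i)
  have hss : ∀ i, s i * s i = πQ i := fun i => Real.mul_self_sqrt (hπQ i).le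
  set D : Matrix (Fin n) (Fin n) ℝ := Matrix.diagonal s with hD
  set Dinv : Matrix (Fin n) (Fin n) ℝ := Matrix.diagonal (fun i => (s i)⁻¹) with hDinv
  have hDDinv : D * Dinv = 1 := by
    rw [hD, hDinv, Matrix.diagonal_mul_diagonal]
    have h1 : (fun i => s i * (s i)⁻¹) = fun _ : Fin n => (1:ℝ) :=
      funext fun i => mul_inv_cancel₀ (hspos i).ne'
    rw [h1, Matrix.diagonal_one]
  have hDinvD : Dinv * D = 1 := by
    rw [hD, hDinv, Matrix.diagonal_mul_diagonal]
    have h1 : (fun i => (s i)⁻¹ * s i) = fun _ : Fin n => (1:ℝ) :=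
      funext fun i => inv_mul_cancel₀ (hspos i).ne'
    rw [h1, Matrix.diagonal_one]
  set T : Matrix (Fin n) (Fin n) ℝ := D * Q * Dinv with hT
  have hTherm : T.IsHermitian := by
    rw [Matrix.IsHermitian]
    ext i j
    simp only [Matrix.conjTranspose_apply, star_trivial, hT, hD, hDinv,
      Matrix.diagonal_mul, Matrix.mul_diagonal]
    have h1 : s i ≠ 0 := (hspos i).ne'
    have h2 : s j ≠ 0 := (hspos j).ne'
    field_simp
    linear_combination Q j i * hss j - Q i j * hss i - hrevQ i j
  set U : Matrix (Fin n) (Fin n) ℝ := (hTherm.eigenvectorUnitary : Matrix (Fin n) (Fin n) ℝ)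
    with hU
  set dd : Fin n → ℝ := RCLike.ofReal ∘ hTherm.eigenvalues with hdd
  have hUU : (star U) * U = 1 := by
    rw [hU]
    exact Unitary.coe_star_mul_self hTherm.eigenvectorUnitary
  have hUUs : U * (star U) = 1 := by
    rw [hU]
    exact Unitary.coe_mul_star_self hTherm.eigenvectorUnitary
  have hspec : T = U * Matrix.diagonal dd * (star U) := hTherm.spectral_theorem
  have hTU : T * U = U * Matrix.diagonal dd := by
    rw [hspec, Matrix.mul_assoc, Matrix.mul_assoc, hUU, Matrix.mul_one]
  set M : Matrix (Fin n) (Fin n) ℝ := Λ * Dinv * U with hM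
  have hPM : P * M = M * Matrix.diagonal dd := by
    have e1 : P * M = P * Λ * (Dinv * U) := by rw [hM]; noncomm_ring
    have e2 : Λ * Q * (Dinv * U) = Λ * Dinv * (T * U) := by
      have e3 : Q * Dinv = Dinv * T := by
        rw [hT]
        calc Q * Dinv = (Dinv * D) * (Q * Dinv) := by rw [hDinvD, one_mul]
          _ = Dinv * (D * Q * Dinv) := by noncomm_ring
      calc Λ * Q * (Dinv * U) = Λ * (Q * Dinv) * U := by noncomm_ring
        _ = Λ * (Dinv * T) * U := by rw [e3]
        _ = Λ * Dinv * (T * U) := by noncomm_ring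
    rw [e1, hint, e2, hTU, hM]
    noncomm_ring
  have hcol : ∀ k, P.mulVec (fun i => M i k) = dd k • (fun i => M i k) := by
    intro k
    funext i
    have h1 : (P * M) i k = (M * Matrix.diagonal dd) i k := by rw [hPM]
    rw [Matrix.mul_apply, Matrix.mul_diagonal] at h1
    simp only [Matrix.mulVec, dotProduct, Pi.smul_apply, smul_eq_mul]
    rw [h1]
    ring
  have hcol' : ∀ k, Phat.mulVec (fun i => M i k) = dd k • (fun i => M i k) := fun k =>
    phat_mulVec_eig P Phat π hπ hPhat hnormal (dd k) _ (hcol k)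
  have hPhM : Phat * M = M * Matrix.diagonal dd := by
    ext i k
    have h1 := congrFun (hcol' k) i
    simp only [Matrix.mulVec, dotProduct, Pi.smul_apply, smul_eq_mul] at h1
    rw [Matrix.mul_apply, Matrix.mul_diagonal, h1]
    ring
  have hMunit : IsUnit M := by
    rw [hM]
    refine (hΛ.mul ?_).mul ?_
    · haveI : Invertible Dinv := ⟨D, hDDinv, hDinvD⟩
      exact isUnit_of_invertible Dinv
    · haveI : Invertible U := ⟨star U, hUU, hUUs⟩
      exact isUnit_of_invertible U
  obtain ⟨Mi, hMi⟩ := hMunit.exists_right_inv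
  calc P = P * (M * Mi) := by rw [hMi, mul_one]
    _ = P * M * Mi := (mul_assoc P M Mi).symm
    _ = Phat * M * Mi := by rw [hPM, hPhM]
    _ = Phat * (M * Mi) := mul_assoc Phat M Mi
    _ = Phat := by rw [hMi, mul_one]
end

section
/- Let P be a finite stochastic matrix with PΛ = ΛQ for Q an ergodic birth-death transition matrix and Λ invertible. If h is excessive for P (Ph ≤ h, h ≥ 0), then the Doob transform P^h defined by P^h(x,y) = p(x,y)h(y)/h(x) satisfies P^h Λ^h = Λ^h Q with Λ^h = D_h^{-1} Λ, where D_h is the diagonal matrix of h. Hence the similarity class S is stable under Doob transforms. -/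
open scoped BigOperators

/-- Ergodicity (primitivity) of a nonnegative matrix. -/
def IsErgodic {n : ℕ} (Q : Matrix (Fin n) (Fin n) ℝ) : Prop :=
  ∃ m : ℕ, ∀ i j, 0 < (Q ^ m) i j

/-- The similarity class is stable under Doob transforms : if `PΛ = ΛQ` and `h` is
excessive for `P`, then `P^h Λ^h = Λ^h Q` with `Λ^h = D_h^{-1} Λ`. -/
theorem doob_transform_similarity (n : ℕ)
    (P Q Λ : Matrix (Fin n) (Fin n) ℝ)
    (hPnn : ∀ i j, 0 ≤ P i j) (hProw : ∀ i, ∑ j, P i j = 1)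
    (hBD : IsBirthDeath Q) (hQerg : IsErgodic Q)
    (hΛ : IsUnit Λ) (hint : P * Λ = Λ * Q)
    (h : Fin n → ℝ)
    (hh0 : ∀ x, 0 ≤ h x)
    (hexc : ∀ x, P.mulVec h x ≤ h x)
    (hpos : ∀ x, 0 < h x)
    (Ph : Matrix (Fin n) (Fin n) ℝ)
    (hPh : Ph = Matrix.of fun x y => P x y * h y / h x)
    (Λh : Matrix (Fin n) (Fin n) ℝ)
    (hΛh : Λh = Matrix.of fun x j => Λ x j / h x) :
    Ph * Λh = Λh * Q := by
  subst hPh hΛh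
  ext x j
  have hx := (hpos x).ne'
  have hPL := congrFun (congrFun hint x) j
  simp only [Matrix.mul_apply, Matrix.of_apply] at hPL ⊢
  have : ∀ y, P x y * h y / h x * (Λ y j / h y) = P x y * Λ y j / h x := by
    intro y
    have hy := (hpos y).ne'
    field_simp
  rw [Finset.sum_congr rfl fun y _ => this y, ← Finset.sum_div, hPL,
    Finset.sum_div]
  exact Finset.sum_congr rfl fun k _ => by ring
end

section
/- Let P be an ergodic stochastic matrix on a finite state space with stationary distribution π, satisfying PΛ = ΛQ for an ergodic reversible birth-death matrix Q and bounded invertible Λ. Then for all n ≥ 0: λ_*^n ≤ ‖P^n − π‖_{ℓ²(π)→ℓ²(π)} ≤ κ(Λ) λ_*^n, where λ_* is the second largest eigenvalue modulus of P and κ(Λ) = ‖Λ‖_op ‖Λ^{-1}‖_op is the condition number. -/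
open scoped BigOperators
open Polynomial

/-- The `ℓ²(w)` norm of `f`. -/
noncomputable def wNorm {n : ℕ} (w f : Fin n → ℝ) : ℝ :=
  Real.sqrt (∑ x, f x ^ 2 * w x)

/-- The operator norm of a matrix from `ℓ²(win)` to `ℓ²(wout)`. -/
noncomputable def wOpNorm {n : ℕ} (win wout : Fin n → ℝ)
    (A : Matrix (Fin n) (Fin n) ℝ) : ℝ :=
  sSup {r : ℝ | ∃ f : Fin n → ℝ, wNorm win f = 1 ∧ r = wNorm wout (A.mulVec f)}

/-! ### Auxiliary: Euclidean norms and operator norms -/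

noncomputable def eNorm {n : ℕ} (f : Fin n → ℝ) : ℝ := Real.sqrt (∑ x, f x ^ 2)

noncomputable def eOpNorm {n : ℕ} (A : Matrix (Fin n) (Fin n) ℝ) : ℝ :=
  sSup {r : ℝ | ∃ g : Fin n → ℝ, eNorm g = 1 ∧ r = eNorm (A.mulVec g)}

lemma eNorm_nonneg {n : ℕ} (f : Fin n → ℝ) : 0 ≤ eNorm f := Real.sqrt_nonneg _

lemma eNorm_zero {n : ℕ} : eNorm (0 : Fin n → ℝ) = 0 := by simp [eNorm]

lemma eNorm_smul {n : ℕ} (c : ℝ) (f : Fin n → ℝ) : eNorm (c • f) = |c| * eNorm f := by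
  unfold eNorm
  rw [← Real.sqrt_sq_eq_abs, ← Real.sqrt_mul (sq_nonneg c), Finset.mul_sum]
  congr 1; apply Finset.sum_congr rfl; intro x _; simp [Pi.smul_apply]; ring

lemma eNorm_pos {n : ℕ} {f : Fin n → ℝ} (hf : f ≠ 0) : 0 < eNorm f := by
  apply Real.sqrt_pos.mpr
  obtain ⟨x, hx⟩ := Function.ne_iff.mp hf
  have hx' : (0:ℝ) < f x ^ 2 := by
    have : f x ≠ 0 := hx
    positivity
  exact Finset.sum_pos' (fun y _ => sq_nonneg _) ⟨x, Finset.mem_univ x, hx'⟩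

lemma abs_le_eNorm {n : ℕ} (f : Fin n → ℝ) (x : Fin n) : |f x| ≤ eNorm f := by
  rw [← Real.sqrt_sq_eq_abs]
  exact Real.sqrt_le_sqrt (Finset.single_le_sum (fun y _ => sq_nonneg (f y)) (Finset.mem_univ x))

lemma eNorm_le_sum_abs {n : ℕ} (f : Fin n → ℝ) : eNorm f ≤ ∑ x, |f x| := by
  rw [eNorm]
  have h1 : (∑ x, f x ^ 2) ≤ (∑ x, |f x|) ^ 2 := by
    rw [sq, Finset.sum_mul_sum]
    calc ∑ x, f x ^ 2 = ∑ x, |f x| * |f x| := by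
          apply Finset.sum_congr rfl; intro x _; rw [← abs_mul, abs_mul_self, sq]
      _ ≤ ∑ x, ∑ y, |f x| * |f y| := by
          apply Finset.sum_le_sum; intro x _
          exact Finset.single_le_sum (f := fun y => |f x| * |f y|)
            (fun y _ => mul_nonneg (abs_nonneg _) (abs_nonneg _)) (Finset.mem_univ x)
  calc Real.sqrt (∑ x, f x ^ 2) ≤ Real.sqrt ((∑ x, |f x|) ^ 2) := Real.sqrt_le_sqrt h1
    _ = ∑ x, |f x| := Real.sqrt_sq (Finset.sum_nonneg fun x _ => abs_nonneg _)

lemma eNorm_mulVec_le {n : ℕ} (A : Matrix (Fin n) (Fin n) ℝ) (g : Fin n → ℝ) :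
    eNorm (A.mulVec g) ≤ (∑ x, ∑ j, |A x j|) * eNorm g := by
  calc eNorm (A.mulVec g) ≤ ∑ x, |A.mulVec g x| := eNorm_le_sum_abs _
    _ ≤ ∑ x, (∑ j, |A x j|) * eNorm g := by
        apply Finset.sum_le_sum; intro x _
        calc |A.mulVec g x| = |∑ j, A x j * g j| := rfl
          _ ≤ ∑ j, |A x j * g j| := Finset.abs_sum_le_sum_abs _ _
          _ ≤ ∑ j, |A x j| * eNorm g := by
              apply Finset.sum_le_sum; intro j _
              rw [abs_mul]
              exact mul_le_mul_of_nonneg_left (abs_le_eNorm g j) (abs_nonneg _)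
          _ = (∑ j, |A x j|) * eNorm g := by rw [Finset.sum_mul]
    _ = (∑ x, ∑ j, |A x j|) * eNorm g := by rw [Finset.sum_mul]

lemma eSet_nonempty {n : ℕ} (hn : 0 < n) (A : Matrix (Fin n) (Fin n) ℝ) :
    {r : ℝ | ∃ g : Fin n → ℝ, eNorm g = 1 ∧ r = eNorm (A.mulVec g)}.Nonempty := by
  have i0 : Fin n := ⟨0, hn⟩
  refine ⟨eNorm (A.mulVec (Pi.single i0 1)), Pi.single i0 1, ?_, rfl⟩
  rw [eNorm]
  rw [show (∑ x, Pi.single (M := fun _ => ℝ) i0 1 x ^ 2) = 1 by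
    rw [Finset.sum_eq_single i0] <;> simp +contextual [Pi.single_apply]]
  exact Real.sqrt_one

lemma eSet_bddAbove {n : ℕ} (A : Matrix (Fin n) (Fin n) ℝ) :
    BddAbove {r : ℝ | ∃ g : Fin n → ℝ, eNorm g = 1 ∧ r = eNorm (A.mulVec g)} := by
  refine ⟨∑ x, ∑ j, |A x j|, ?_⟩
  rintro r ⟨g, hg, rfl⟩
  simpa [hg] using eNorm_mulVec_le A g

lemma le_eOpNorm {n : ℕ} (A : Matrix (Fin n) (Fin n) ℝ) {g : Fin n → ℝ} (hg : eNorm g = 1) :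
    eNorm (A.mulVec g) ≤ eOpNorm A :=
  le_csSup (eSet_bddAbove A) ⟨g, hg, rfl⟩

lemma eOpNorm_nonneg {n : ℕ} (hn : 0 < n) (A : Matrix (Fin n) (Fin n) ℝ) : 0 ≤ eOpNorm A := by
  obtain ⟨r, g, hg, rfl⟩ := eSet_nonempty hn A
  exact (eNorm_nonneg _).trans (le_eOpNorm A hg)

lemma eOpNorm_le {n : ℕ} (hn : 0 < n) (A : Matrix (Fin n) (Fin n) ℝ) {c : ℝ}
    (h : ∀ g : Fin n → ℝ, eNorm g = 1 → eNorm (A.mulVec g) ≤ c) : eOpNorm A ≤ c := by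
  apply csSup_le (eSet_nonempty hn A)
  rintro r ⟨g, hg, rfl⟩; exact h g hg

lemma eNorm_mulVec_le_opNorm {n : ℕ} (hn : 0 < n) (A : Matrix (Fin n) (Fin n) ℝ) (g : Fin n → ℝ) :
    eNorm (A.mulVec g) ≤ eOpNorm A * eNorm g := by
  rcases eq_or_ne g 0 with rfl | hg
  · simp [Matrix.mulVec_zero, eNorm_zero]
  · have ht : 0 < eNorm g := eNorm_pos hg
    have h1 : eNorm ((eNorm g)⁻¹ • g) = 1 := by
      rw [eNorm_smul, abs_of_pos (inv_pos.mpr ht), inv_mul_cancel₀ ht.ne']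
    have := le_eOpNorm A h1
    rw [Matrix.mulVec_smul, eNorm_smul, abs_of_pos (inv_pos.mpr ht)] at this
    calc eNorm (A.mulVec g) = ((eNorm g)⁻¹ * eNorm (A.mulVec g)) * eNorm g := by
          field_simp
      _ ≤ eOpNorm A * eNorm g := mul_le_mul_of_nonneg_right this ht.le

lemma eOpNorm_mul_le {n : ℕ} (hn : 0 < n) (A B : Matrix (Fin n) (Fin n) ℝ) :
    eOpNorm (A * B) ≤ eOpNorm A * eOpNorm B := by
  apply eOpNorm_le hn
  intro g hg
  rw [← Matrix.mulVec_mulVec]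
  calc eNorm (A.mulVec (B.mulVec g)) ≤ eOpNorm A * eNorm (B.mulVec g) :=
        eNorm_mulVec_le_opNorm hn A _
    _ ≤ eOpNorm A * (eOpNorm B * eNorm g) :=
        mul_le_mul_of_nonneg_left (eNorm_mulVec_le_opNorm hn B g) (eOpNorm_nonneg hn A)
    _ = eOpNorm A * eOpNorm B := by rw [hg, mul_one]

lemma abs_eig_le_eOpNorm {n : ℕ} (A : Matrix (Fin n) (Fin n) ℝ) {t : ℝ} {y : Fin n → ℝ}
    (hy : y ≠ 0) (h : A.mulVec y = t • y) : |t| ≤ eOpNorm A := by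
  have ht : 0 < eNorm y := eNorm_pos hy
  have h1 : eNorm ((eNorm y)⁻¹ • y) = 1 := by
    rw [eNorm_smul, abs_of_pos (inv_pos.mpr ht), inv_mul_cancel₀ ht.ne']
  have := le_eOpNorm A h1
  rwa [Matrix.mulVec_smul, h, smul_comm, eNorm_smul, h1, mul_one] at this

/-! ### Auxiliary: diagonal scaling and the bridge `wOpNorm = eOpNorm` -/

noncomputable def dSq {n : ℕ} (w : Fin n → ℝ) : Matrix (Fin n) (Fin n) ℝ :=
  Matrix.diagonal (fun x => Real.sqrt (w x))

noncomputable def dSqInv {n : ℕ} (w : Fin n → ℝ) : Matrix (Fin n) (Fin n) ℝ :=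
  Matrix.diagonal (fun x => (Real.sqrt (w x))⁻¹)

lemma dSq_mulVec {n : ℕ} (w : Fin n → ℝ) (f : Fin n → ℝ) (x : Fin n) :
    (dSq w).mulVec f x = Real.sqrt (w x) * f x := by
  simp [dSq, Matrix.mulVec_diagonal]

lemma dSqInv_mulVec {n : ℕ} (w : Fin n → ℝ) (f : Fin n → ℝ) (x : Fin n) :
    (dSqInv w).mulVec f x = (Real.sqrt (w x))⁻¹ * f x := by
  simp [dSqInv, Matrix.mulVec_diagonal]

lemma dSqInv_dSq {n : ℕ} {w : Fin n → ℝ} (hw : ∀ x, 0 < w x) :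
    dSqInv w * dSq w = 1 := by
  rw [dSqInv, dSq, Matrix.diagonal_mul_diagonal]
  rw [show ((fun x => (Real.sqrt (w x))⁻¹ * Real.sqrt (w x))) = fun _ => 1 from ?_,
    Matrix.diagonal_one]
  funext x
  exact inv_mul_cancel₀ (Real.sqrt_pos.mpr (hw x)).ne'

lemma dSq_dSqInv {n : ℕ} {w : Fin n → ℝ} (hw : ∀ x, 0 < w x) :
    dSq w * dSqInv w = 1 := by
  rw [dSq, dSqInv, Matrix.diagonal_mul_diagonal]
  rw [show ((fun x => Real.sqrt (w x) * (Real.sqrt (w x))⁻¹)) = fun _ => 1 from ?_,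
    Matrix.diagonal_one]
  funext x
  exact mul_inv_cancel₀ (Real.sqrt_pos.mpr (hw x)).ne'

lemma wNorm_eq_eNorm {n : ℕ} {w : Fin n → ℝ} (hw : ∀ x, 0 < w x) (f : Fin n → ℝ) :
    wNorm w f = eNorm ((dSq w).mulVec f) := by
  unfold wNorm eNorm
  congr 1
  apply Finset.sum_congr rfl
  intro x _
  rw [dSq_mulVec, mul_pow, Real.sq_sqrt (hw x).le]
  ring

lemma dSqInv_mulVec_dSq {n : ℕ} {w : Fin n → ℝ} (hw : ∀ x, 0 < w x) (f : Fin n → ℝ) :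
    (dSqInv w).mulVec ((dSq w).mulVec f) = f := by
  rw [Matrix.mulVec_mulVec, dSqInv_dSq hw, Matrix.one_mulVec]

lemma dSq_mulVec_dSqInv {n : ℕ} {w : Fin n → ℝ} (hw : ∀ x, 0 < w x) (f : Fin n → ℝ) :
    (dSq w).mulVec ((dSqInv w).mulVec f) = f := by
  rw [Matrix.mulVec_mulVec, dSq_dSqInv hw, Matrix.one_mulVec]

lemma wOpNorm_eq_eOpNorm {n : ℕ} {win wout : Fin n → ℝ} (hin : ∀ x, 0 < win x)
    (hout : ∀ x, 0 < wout x) (A : Matrix (Fin n) (Fin n) ℝ) :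
    wOpNorm win wout A = eOpNorm (dSq wout * A * dSqInv win) := by
  unfold wOpNorm eOpNorm
  congr 1
  ext r
  constructor
  · rintro ⟨f, hf, rfl⟩
    refine ⟨(dSq win).mulVec f, (wNorm_eq_eNorm hin f).symm.trans hf, ?_⟩
    rw [wNorm_eq_eNorm hout, ← Matrix.mulVec_mulVec, ← Matrix.mulVec_mulVec,
      dSqInv_mulVec_dSq hin, Matrix.mulVec_mulVec]
  · rintro ⟨g, hg, rfl⟩
    refine ⟨(dSqInv win).mulVec g, ?_, ?_⟩
    · rw [wNorm_eq_eNorm hin, dSq_mulVec_dSqInv hin]; exact hg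
    · rw [wNorm_eq_eNorm hout, ← Matrix.mulVec_mulVec, ← Matrix.mulVec_mulVec,
        Matrix.mulVec_mulVec]

/-! ### Auxiliary: spectral estimates -/

lemma sum_sq_expansion {n : ℕ} {u : Fin n → Fin n → ℝ}
    (horth : ∀ i j, ∑ x, u i x * u j x = if i = j then (1:ℝ) else 0) (d : Fin n → ℝ) :
    ∑ x, (∑ i, d i * u i x) ^ 2 = ∑ i, d i ^ 2 := by
  have : ∀ x : Fin n, (∑ i, d i * u i x) ^ 2 = ∑ i, ∑ j, (d i * d j) * (u i x * u j x) := by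
    intro x
    rw [sq, Finset.sum_mul_sum]
    apply Finset.sum_congr rfl; intro i _
    apply Finset.sum_congr rfl; intro j _
    ring
  rw [Finset.sum_congr rfl fun x _ => this x, Finset.sum_comm]
  rw [Finset.sum_congr rfl (fun i (_ : i ∈ Finset.univ) => Finset.sum_comm (γ := Fin n))]
  have : ∀ i : Fin n, ∑ j, ∑ x, (d i * d j) * (u i x * u j x) = d i ^ 2 := by
    intro i
    have h1 : ∀ j : Fin n, ∑ x, (d i * d j) * (u i x * u j x)
        = (d i * d j) * (if i = j then (1:ℝ) else 0) := by
      intro j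
      rw [← Finset.mul_sum, horth i j]
    rw [Finset.sum_congr rfl fun j _ => h1 j]
    simp only [mul_ite, mul_one, mul_zero, Finset.sum_ite_eq, Finset.mem_univ, if_true, sq]
  exact Finset.sum_congr rfl fun i _ => this i

lemma exists_coords {n : ℕ} (B : OrthonormalBasis (Fin n) ℝ (EuclideanSpace ℝ (Fin n)))
    (g : Fin n → ℝ) : ∃ c : Fin n → ℝ, ∀ x, g x = ∑ i, c i * (B i) x := by
  set G : EuclideanSpace ℝ (Fin n) := (WithLp.equiv 2 (Fin n → ℝ)).symm g with hG
  refine ⟨fun i => B.repr G i, fun x => ?_⟩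
  have h := B.sum_repr G
  have h2 := congrArg (EuclideanSpace.proj (𝕜 := ℝ) x) h
  rw [map_sum] at h2
  simp only [_root_.map_smul, PiLp.proj_apply, smul_eq_mul] at h2
  rw [show g x = G x from rfl]
  simpa using h2.symm

lemma spectral_bound {n : ℕ} (A : Matrix (Fin n) (Fin n) ℝ) (u : Fin n → Fin n → ℝ)
    (ν : Fin n → ℝ) (m : ℝ) (hm : 0 ≤ m)
    (horth : ∀ i j, ∑ x, u i x * u j x = if i = j then (1:ℝ) else 0)
    (heig : ∀ i, A.mulVec (u i) = ν i • u i)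
    (hν : ∀ i, |ν i| ≤ m)
    (g : Fin n → ℝ) (c : Fin n → ℝ) (hc : ∀ x, g x = ∑ i, c i * u i x) :
    eNorm (A.mulVec g) ≤ m * eNorm g := by
  have hAg : ∀ x, A.mulVec g x = ∑ i, (c i * ν i) * u i x := by
    intro x
    calc A.mulVec g x = ∑ y, A x y * g y := rfl
      _ = ∑ y, A x y * ∑ i, c i * u i y := by
          apply Finset.sum_congr rfl; intro y _; rw [hc y]
      _ = ∑ y, ∑ i, c i * (A x y * u i y) := by
          apply Finset.sum_congr rfl; intro y _; rw [Finset.mul_sum]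
          apply Finset.sum_congr rfl; intro i _; ring
      _ = ∑ i, ∑ y, c i * (A x y * u i y) := Finset.sum_comm
      _ = ∑ i, (c i * ν i) * u i x := by
          apply Finset.sum_congr rfl; intro i _
          rw [← Finset.mul_sum]
          have : ∑ y, A x y * u i y = A.mulVec (u i) x := rfl
          rw [this, heig i]
          simp [Pi.smul_apply]; ring
  have e1 : eNorm (A.mulVec g) = Real.sqrt (∑ i, (c i * ν i) ^ 2) := by
    rw [eNorm]
    congr 1
    rw [Finset.sum_congr rfl fun x _ => by rw [hAg x]]
    exact sum_sq_expansion horth _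
  have e2 : eNorm g = Real.sqrt (∑ i, c i ^ 2) := by
    rw [eNorm]
    congr 1
    rw [Finset.sum_congr rfl fun x _ => by rw [hc x]]
    exact sum_sq_expansion horth _
  rw [e1, e2]
  have hb : ∑ i, (c i * ν i) ^ 2 ≤ m ^ 2 * ∑ i, c i ^ 2 := by
    rw [Finset.mul_sum]
    apply Finset.sum_le_sum
    intro i _
    have : ν i ^ 2 ≤ m ^ 2 := by
      rw [← sq_abs]
      exact pow_le_pow_left₀ (abs_nonneg _) (hν i) 2
    calc (c i * ν i) ^ 2 = ν i ^ 2 * c i ^ 2 := by ring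
      _ ≤ m ^ 2 * c i ^ 2 := mul_le_mul_of_nonneg_right this (sq_nonneg _)
  calc Real.sqrt (∑ i, (c i * ν i) ^ 2) ≤ Real.sqrt (m ^ 2 * ∑ i, c i ^ 2) :=
        Real.sqrt_le_sqrt hb
    _ = m * Real.sqrt (∑ i, c i ^ 2) := by
        rw [Real.sqrt_mul (sq_nonneg m), Real.sqrt_sq hm]

/-! ### Auxiliary: charpoly evaluation and fixed vectors -/

lemma eval_charpoly' {n : ℕ} (M : Matrix (Fin n) (Fin n) ℝ) (t : ℝ) :
    (M.charpoly).eval t = (Matrix.diagonal (fun _ => t) - M).det := by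
  have h1 : M.charpoly.eval t = (Polynomial.evalRingHom t) (Matrix.charmatrix M).det := rfl
  rw [h1, RingHom.map_det]
  congr 1
  ext i j
  by_cases h : i = j
  · subst h
    simp [Matrix.charmatrix_apply_eq, Matrix.sub_apply]
  · simp [Matrix.charmatrix_apply_ne M i j h, Matrix.sub_apply, Matrix.diagonal_apply_ne _ h]

lemma fixed_const_of_pos_pow {n : ℕ} (hn : 0 < n) (P : Matrix (Fin n) (Fin n) ℝ)
    (hProw : ∀ i, ∑ j, P i j = 1) (m : ℕ) (hm : ∀ i j, 0 < (P ^ m) i j)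
    (g : Fin n → ℝ) (hg : P.mulVec g = g) : ∀ i j, g i = g j := by
  have hrow : ∀ (k : ℕ) (i : Fin n), ∑ j, (P ^ k) i j = 1 := by
    intro k
    induction k with
    | zero => intro i; simp [Matrix.one_apply]
    | succ k ih =>
      intro i
      rw [pow_succ]
      calc ∑ j, (P ^ k * P) i j = ∑ j, ∑ l, (P ^ k) i l * P l j := by
            apply Finset.sum_congr rfl; intro j _; rw [Matrix.mul_apply]
        _ = ∑ l, (P ^ k) i l * ∑ j, P l j := by
            rw [Finset.sum_comm]
            apply Finset.sum_congr rfl; intro l _; rw [Finset.mul_sum]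
        _ = 1 := by
            rw [Finset.sum_congr rfl fun l _ => by rw [hProw l, mul_one]]
            exact ih i
  have hgm' : ∀ k : ℕ, (P ^ k).mulVec g = g := by
    intro k
    induction k with
    | zero => simp [Matrix.one_mulVec]
    | succ k ih => rw [pow_succ, ← Matrix.mulVec_mulVec, hg, ih]
  have hgm : (P ^ m).mulVec g = g := hgm' m
  obtain ⟨i₀, _, hmax⟩ := Finset.exists_max_image Finset.univ g ⟨⟨0, hn⟩, Finset.mem_univ _⟩
  have hall : ∀ j, g j = g i₀ := by
    intro j
    have hsum : ∑ y, (P ^ m) i₀ y * (g i₀ - g y) = 0 := by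
      have hv : (P ^ m).mulVec g i₀ = ∑ y, (P ^ m) i₀ y * g y := rfl
      have : ∑ y, (P ^ m) i₀ y * (g i₀ - g y)
          = (∑ y, (P ^ m) i₀ y) * g i₀ - (P ^ m).mulVec g i₀ := by
        rw [hv, Finset.sum_mul, ← Finset.sum_sub_distrib]
        apply Finset.sum_congr rfl; intro y _; ring
      rw [this, hrow m i₀, hgm, one_mul, sub_self]
    have hterm : ∀ y ∈ Finset.univ, (0:ℝ) ≤ (P ^ m) i₀ y * (g i₀ - g y) := fun y _ =>
      mul_nonneg (hm i₀ y).le (sub_nonneg.mpr (hmax y (Finset.mem_univ y)))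
    have := (Finset.sum_eq_zero_iff_of_nonneg hterm).mp hsum j (Finset.mem_univ j)
    have h2 : g i₀ - g j = 0 := by
      by_contra h
      exact h (mul_left_cancel₀ (hm i₀ j).ne' (by rw [this, mul_zero]))
    linarith
  intro i j; rw [hall i, hall j]

lemma bd_fixed_const {n : ℕ} (hn : 0 < n) (Q : Matrix (Fin n) (Fin n) ℝ)
    (hnn : ∀ i j, 0 ≤ Q i j) (hrowQ : ∀ i, ∑ j, Q i j = 1)
    (hpos : ∀ i j : Fin n, |(i : ℤ) - (j : ℤ)| = 1 → 0 < Q i j)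
    (g : Fin n → ℝ) (hg : Q.mulVec g = g) : ∀ i j, g i = g j := by
  obtain ⟨i₀, _, hmax⟩ := Finset.exists_max_image Finset.univ g ⟨⟨0, hn⟩, Finset.mem_univ _⟩
  have step : ∀ i : Fin n, g i = g i₀ → ∀ j : Fin n, 0 < Q i j → g j = g i₀ := by
    intro i hi j hj
    have hsum : ∑ y, Q i y * (g i₀ - g y) = 0 := by
      have hv : Q.mulVec g i = ∑ y, Q i y * g y := rfl
      have : ∑ y, Q i y * (g i₀ - g y) = (∑ y, Q i y) * g i₀ - Q.mulVec g i := by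
        rw [hv, Finset.sum_mul, ← Finset.sum_sub_distrib]
        apply Finset.sum_congr rfl; intro y _; ring
      rw [this, hrowQ i, hg, one_mul, hi, sub_self]
    have hterm : ∀ y ∈ Finset.univ, (0:ℝ) ≤ Q i y * (g i₀ - g y) := fun y _ =>
      mul_nonneg (hnn i y) (sub_nonneg.mpr (hmax y (Finset.mem_univ y)))
    have h0 := (Finset.sum_eq_zero_iff_of_nonneg hterm).mp hsum j (Finset.mem_univ j)
    have h2 : g i₀ - g j = 0 := by
      by_contra h
      exact h (mul_left_cancel₀ hj.ne' (by rw [h0, mul_zero]))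
    linarith
  have adj_up : ∀ (k : ℕ) (h2 : k + 1 < n),
      g ⟨k, Nat.lt_of_succ_lt h2⟩ = g i₀ → g ⟨k+1, h2⟩ = g i₀ := by
    intro k h2 hgk
    refine step _ hgk _ (hpos _ _ ?_)
    simp
  have adj_down : ∀ (k : ℕ) (h2 : k + 1 < n),
      g ⟨k+1, h2⟩ = g i₀ → g ⟨k, Nat.lt_of_succ_lt h2⟩ = g i₀ := by
    intro k h2 hgk
    refine step _ hgk _ (hpos _ _ ?_)
    simp
  have down_all : ∀ (k : ℕ) (h : k < n), g ⟨k, h⟩ = g i₀ → g ⟨0, hn⟩ = g i₀ := by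
    intro k
    induction k with
    | zero => intro h hgk; exact hgk
    | succ k ih => intro h hgk; exact ih (Nat.lt_of_succ_lt h) (adj_down k h hgk)
  have g0 : g ⟨0, hn⟩ = g i₀ := by
    have := down_all i₀.val i₀.isLt
    rw [Fin.eta] at this
    exact this rfl
  have up_all : ∀ (k : ℕ) (h : k < n), g ⟨k, h⟩ = g i₀ := by
    intro k
    induction k with
    | zero => intro h; exact g0
    | succ k ih => intro h; exact adj_up k h (ih (Nat.lt_of_succ_lt h))
  intro i j
  have hi := up_all i.val i.isLt
  have hj := up_all j.val j.isLt
  rw [Fin.eta] at hi hj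
  rw [hi, hj]

set_option maxHeartbeats 1000000 in
/-- `ℓ²(π)` convergence to equilibrium for an ergodic chain in the class `𝒮` :
`λ_*^n ≤ ‖Pⁿ − π‖_{ℓ²(π)→ℓ²(π)} ≤ κ(Λ) λ_*^n` for all `n ≥ 0`. -/
theorem ell2_convergence_rate (n : ℕ) (hn : 0 < n)
    (P Q Λ : Matrix (Fin n) (Fin n) ℝ) (π πQ : Fin n → ℝ)
    (hPnn : ∀ i j, 0 ≤ P i j) (hProw : ∀ i, ∑ j, P i j = 1)
    (hπ : ∀ i, 0 < π i) (hπsum : ∑ i, π i = 1)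
    (hstat : ∀ j, ∑ i, π i * P i j = π j)
    (herg : ∃ m : ℕ, ∀ i j, 0 < (P ^ m) i j)
    (hπQ : ∀ i, 0 < πQ i)
    (hBD : IsBirthDeath Q)
    (hrevQ : ∀ i j, πQ i * Q i j = πQ j * Q j i)
    (hΛ : IsUnit Λ) (hint : P * Λ = Λ * Q)
    (lam : Fin n → ℝ)
    (hchar : P.charpoly = ∏ i, (X - Polynomial.C (lam i)))
    (lamStar : ℝ)
    (hstar1 : ∀ i, lam i ≠ 1 → |lam i| ≤ lamStar)
    (hstar2 : ∃ i, lam i ≠ 1 ∧ |lam i| = lamStar)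
    (Pi : Matrix (Fin n) (Fin n) ℝ) (hPi : Pi = Matrix.of fun _ y => π y)
    (κ : ℝ) (hκ : κ = wOpNorm πQ π Λ * wOpNorm π πQ Λ⁻¹)
    (N : ℕ) :
    lamStar ^ N ≤ wOpNorm π π (P ^ N - Pi) ∧
      wOpNorm π π (P ^ N - Pi) ≤ κ * lamStar ^ N := by
  classical
  obtain ⟨hQnn, hQrow, _, hQpos⟩ := hBD
  -- basic positivity facts
  have hsq : ∀ x, 0 < Real.sqrt (πQ x) := fun x => Real.sqrt_pos.mpr (hπQ x)
  have hsqπ : ∀ x, 0 < Real.sqrt (π x) := fun x => Real.sqrt_pos.mpr (hπ x)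
  have hls0 : 0 ≤ lamStar := by
    obtain ⟨i, _, habs⟩ := hstar2
    rw [← habs]; exact abs_nonneg _
  have hlsN : (0:ℝ) ≤ lamStar ^ N := pow_nonneg hls0 N
  -- invertibility facts
  have hdetΛ : IsUnit Λ.det := (Matrix.isUnit_iff_isUnit_det Λ).mp hΛ
  have hΛinv : Λ⁻¹ * Λ = 1 := Matrix.nonsing_inv_mul Λ hdetΛ
  have hΛinv' : Λ * Λ⁻¹ = 1 := Matrix.mul_nonsing_inv Λ hdetΛ
  -- the symmetrized matrix S0
  set v : Fin n → ℝ := fun x => Real.sqrt (πQ x) with hv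
  set S0 : Matrix (Fin n) (Fin n) ℝ := dSq πQ * Q * dSqInv πQ with hS0def
  have hS0app : ∀ i j, S0 i j = Real.sqrt (πQ i) * Q i j * (Real.sqrt (πQ j))⁻¹ := by
    intro i j
    rw [hS0def, dSq, dSqInv, Matrix.mul_diagonal, Matrix.diagonal_mul]
  have hS0sym : ∀ i j, S0 i j = S0 j i := by
    intro i j
    rw [hS0app, hS0app]
    have hi := Real.mul_self_sqrt (hπQ i).le
    have hj := Real.mul_self_sqrt (hπQ j).le
    have hij := hrevQ i j
    have hi0 : Real.sqrt (πQ i) ≠ 0 := (hsq i).ne'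
    have hj0 : Real.sqrt (πQ j) ≠ 0 := (hsq j).ne'
    field_simp
    linear_combination Q i j * hi - Q j i * hj + hij
  have hS0herm : S0.IsHermitian := by
    apply Matrix.ext
    intro i j
    rw [Matrix.conjTranspose_apply, star_trivial]
    exact hS0sym j i
  have hS0T : S0.transpose = S0 := by
    apply Matrix.ext
    intro i j
    rw [Matrix.transpose_apply]
    exact hS0sym j i
  -- S0 fixes v
  have hS0v : S0.mulVec v = v := by
    funext x
    have : ∀ y, S0 x y * v y = Real.sqrt (πQ x) * Q x y := by
      intro y
      rw [hS0app, hv]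
      rw [mul_assoc, inv_mul_cancel₀ (hsq y).ne', mul_one]
    calc S0.mulVec v x = ∑ y, S0 x y * v y := rfl
      _ = ∑ y, Real.sqrt (πQ x) * Q x y := Finset.sum_congr rfl fun y _ => this y
      _ = Real.sqrt (πQ x) * ∑ y, Q x y := by rw [Finset.mul_sum]
      _ = v x := by rw [hQrow x, mul_one]
  -- fixed vectors of S0 are multiples of v
  have hS0fix : ∀ w : Fin n → ℝ, S0.mulVec w = w → ∃ k : ℝ, ∀ x, w x = k * v x := by
    intro w hw
    set g : Fin n → ℝ := (dSqInv πQ).mulVec w with hgdef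
    have hQg : Q.mulVec g = g := by
      have h1 : S0.mulVec w = (dSq πQ).mulVec (Q.mulVec g) := by
        rw [hS0def, ← Matrix.mulVec_mulVec, ← Matrix.mulVec_mulVec]
      have h2 : (dSqInv πQ).mulVec (S0.mulVec w) = Q.mulVec g := by
        rw [h1, dSqInv_mulVec_dSq hπQ]
      rw [hw] at h2
      rw [← h2]
    have hconst := bd_fixed_const hn Q hQnn hQrow hQpos g hQg
    refine ⟨g ⟨0, hn⟩, fun x => ?_⟩
    have hx : w x = Real.sqrt (πQ x) * g x := by
      have := dSq_mulVec_dSqInv hπQ w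
      conv_lhs => rw [← this]
      rw [dSq_mulVec]
    rw [hx, hconst x ⟨0, hn⟩]
    ring
  -- eigen decomposition of S0
  set u : Fin n → Fin n → ℝ := fun i => ⇑(hS0herm.eigenvectorBasis i) with hu
  set μ : Fin n → ℝ := hS0herm.eigenvalues with hμ
  have horth : ∀ i j, ∑ x, u i x * u j x = if i = j then (1:ℝ) else 0 := by
    intro i j
    have := orthonormal_iff_ite.mp (hS0herm.eigenvectorBasis).orthonormal i j
    rw [PiLp.inner_apply] at this
    simpa [hu, mul_comm] using this
  have hueig : ∀ i, S0.mulVec (u i) = μ i • u i := fun i =>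
    hS0herm.mulVec_eigenvectorBasis i
  have hu_ne : ∀ i, u i ≠ (0 : Fin n → ℝ) := by
    intro i h
    have := horth i i
    rw [if_pos rfl] at this
    rw [h] at this
    simp at this
  -- the right fixed vector of P : Λ • 1 is a constant c ≠ 0
  set one : Fin n → ℝ := fun _ => (1:ℝ) with hone
  have hQ1 : Q.mulVec one = one := by
    funext x
    calc Q.mulVec one x = ∑ y, Q x y * 1 := rfl
      _ = 1 := by rw [Finset.sum_congr rfl fun y _ => mul_one (Q x y)]; exact hQrow x
  have hPΛ1 : P.mulVec (Λ.mulVec one) = Λ.mulVec one := by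
    rw [Matrix.mulVec_mulVec, hint, ← Matrix.mulVec_mulVec, hQ1]
  obtain ⟨m, hm⟩ := herg
  have hcconst := fixed_const_of_pos_pow hn P hProw m hm (Λ.mulVec one) hPΛ1
  set c : ℝ := Λ.mulVec one ⟨0, hn⟩ with hc
  have hcall : Λ.mulVec one = c • one := by
    funext x
    show Λ.mulVec one x = c * one x
    rw [hone, mul_one]
    exact hcconst x ⟨0, hn⟩
  have hcne : c ≠ 0 := by
    intro h0
    have h1 : Λ⁻¹.mulVec (Λ.mulVec one) = one := by
      rw [Matrix.mulVec_mulVec, hΛinv, Matrix.one_mulVec]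
    rw [hcall, h0, zero_smul, Matrix.mulVec_zero] at h1
    have := congrFun h1 ⟨0, hn⟩
    simp [hone] at this
  have hΛinv1 : Λ⁻¹.mulVec one = c⁻¹ • one := by
    have h1 : Λ⁻¹.mulVec (Λ.mulVec one) = one := by
      rw [Matrix.mulVec_mulVec, hΛinv, Matrix.one_mulVec]
    rw [hcall, Matrix.mulVec_smul] at h1
    exact ((inv_smul_eq_iff₀ hcne).mpr h1.symm).symm
  -- the left fixed vector of Q : π Λ = k • πQ with k ≠ 0
  set u' : Fin n → ℝ := Matrix.vecMul π Λ with hu'def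
  have hπP : Matrix.vecMul π P = π := by
    funext j
    exact hstat j
  have hu'Q : Matrix.vecMul u' Q = u' := by
    rw [hu'def, Matrix.vecMul_vecMul, ← hint, ← Matrix.vecMul_vecMul, hπP]
  have hQT : Q.transpose.mulVec u' = u' := by
    rw [Matrix.mulVec_transpose, hu'Q]
  have hQTeq : Q.transpose = dSq πQ * S0 * dSqInv πQ := by
    have h1 : dSqInv πQ * S0 * dSq πQ = Q := by
      rw [hS0def]
      calc dSqInv πQ * (dSq πQ * Q * dSqInv πQ) * dSq πQ
          = (dSqInv πQ * dSq πQ) * Q * (dSqInv πQ * dSq πQ) := by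
            simp only [Matrix.mul_assoc]
        _ = Q := by rw [dSqInv_dSq hπQ, Matrix.one_mul, Matrix.mul_one]
    rw [← h1]
    rw [Matrix.transpose_mul, Matrix.transpose_mul, hS0T]
    rw [dSq, dSqInv, Matrix.diagonal_transpose, Matrix.diagonal_transpose]
    simp only [Matrix.mul_assoc]
  have hS0w : S0.mulVec ((dSqInv πQ).mulVec u') = (dSqInv πQ).mulVec u' := by
    have h1 : Q.transpose.mulVec u' = (dSq πQ).mulVec (S0.mulVec ((dSqInv πQ).mulVec u')) := by
      rw [hQTeq, ← Matrix.mulVec_mulVec, ← Matrix.mulVec_mulVec]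
    rw [hQT] at h1
    have := congrArg (fun z => (dSqInv πQ).mulVec z) h1
    rw [dSqInv_mulVec_dSq hπQ] at this
    exact this.symm
  obtain ⟨k, hk⟩ := hS0fix _ hS0w
  have hu'eq : ∀ x, u' x = k * πQ x := by
    intro x
    have h1 : u' x = Real.sqrt (πQ x) * ((dSqInv πQ).mulVec u') x := by
      rw [← dSq_mulVec πQ, dSq_mulVec_dSqInv hπQ]
    rw [h1, hk x]
    have hms := Real.mul_self_sqrt (hπQ x).le
    show Real.sqrt (πQ x) * (k * Real.sqrt (πQ x)) = k * πQ x
    linear_combination k * hms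
  have hkne : k ≠ 0 := by
    intro h0
    have hu'0 : u' = 0 := by
      funext x; rw [hu'eq x, h0, zero_mul]; rfl
    have h1 : Matrix.vecMul u' Λ⁻¹ = π := by
      rw [hu'def, Matrix.vecMul_vecMul, hΛinv', Matrix.vecMul_one]
    rw [hu'0, Matrix.zero_vecMul] at h1
    have := congrFun h1 ⟨0, hn⟩
    exact absurd this.symm (hπ ⟨0, hn⟩).ne'
  -- the matrix B = Λ⁻¹ Pi Λ and its symmetrization Bs
  set B : Matrix (Fin n) (Fin n) ℝ := Λ⁻¹ * Pi * Λ with hBdef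
  set e : ℝ := k * c⁻¹ with hedef
  have hene : e ≠ 0 := mul_ne_zero hkne (inv_ne_zero hcne)
  have hPiapp : ∀ i j, Pi i j = π j := by
    intro i j; rw [hPi]; rfl
  have hPiΛ : ∀ i j, (Pi * Λ) i j = u' j := by
    intro i j
    rw [Matrix.mul_apply]
    apply Finset.sum_congr rfl
    intro l _
    rw [hPiapp]
  have hBapp : ∀ i j, B i j = e * πQ j := by
    intro i j
    rw [hBdef, Matrix.mul_assoc, Matrix.mul_apply]
    have h1 : ∀ l, (Λ⁻¹) i l * (Pi * Λ) l j = (k * πQ j) * (Λ⁻¹) i l := by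
      intro l
      rw [hPiΛ, hu'eq j]
      ring
    rw [Finset.sum_congr rfl fun l _ => h1 l, ← Finset.mul_sum]
    have h2 : ∑ l, (Λ⁻¹) i l = c⁻¹ := by
      have h3 := congrFun hΛinv1 i
      have h4 : (Λ⁻¹.mulVec one) i = ∑ l, (Λ⁻¹) i l := by
        show ∑ l, (Λ⁻¹) i l * one l = ∑ l, (Λ⁻¹) i l
        exact Finset.sum_congr rfl fun l _ => mul_one _
      rw [h4] at h3
      simpa [hone] using h3
    rw [h2, hedef]
    ring
  have hPiPi : Pi * Pi = Pi := by
    apply Matrix.ext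
    intro i j
    rw [Matrix.mul_apply, hPiapp]
    have : ∀ l, Pi i l * Pi l j = π l * π j := by
      intro l; rw [hPiapp, hPiapp]
    rw [Finset.sum_congr rfl fun l _ => this l, ← Finset.sum_mul, hπsum, one_mul]
  have hBB : B * B = B := by
    rw [hBdef]
    calc Λ⁻¹ * Pi * Λ * (Λ⁻¹ * Pi * Λ) = Λ⁻¹ * Pi * (Λ * Λ⁻¹) * Pi * Λ := by
          simp only [Matrix.mul_assoc]
      _ = Λ⁻¹ * (Pi * Pi) * Λ := by rw [hΛinv', Matrix.mul_one]; simp only [Matrix.mul_assoc]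
      _ = Λ⁻¹ * Pi * Λ := by rw [hPiPi]
  have hesum : e * (∑ x, πQ x) = 1 := by
    set j0 : Fin n := ⟨0, hn⟩
    have h := congrFun (congrFun hBB j0) j0
    have h1 : (B * B) j0 j0 = (e * ∑ l, πQ l) * (e * πQ j0) := by
      rw [Matrix.mul_apply]
      have : ∀ l, B j0 l * B l j0 = (e * πQ l) * (e * πQ j0) := by
        intro l; rw [hBapp, hBapp]
      rw [Finset.sum_congr rfl fun l _ => this l, ← Finset.sum_mul, ← Finset.mul_sum]
    rw [h1, hBapp] at h
    have h2 : (e * πQ j0) ≠ 0 := mul_ne_zero hene (hπQ j0).ne'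
    have h' : (e * ∑ l, πQ l) * (e * πQ j0) = 1 * (e * πQ j0) := by rw [one_mul]; exact h
    exact mul_right_cancel₀ h2 h'
  set Bs : Matrix (Fin n) (Fin n) ℝ := dSq πQ * B * dSqInv πQ with hBsdef
  have hBsapp : ∀ i j, Bs i j = e * v i * v j := by
    intro i j
    rw [hBsdef, dSq, dSqInv, Matrix.mul_diagonal, Matrix.diagonal_mul, hBapp]
    have hms := Real.mul_self_sqrt (hπQ j).le
    have hj0 : Real.sqrt (πQ j) ≠ 0 := (hsq j).ne'
    show Real.sqrt (πQ i) * (e * πQ j) * (Real.sqrt (πQ j))⁻¹ = e * Real.sqrt (πQ i) * Real.sqrt (πQ j)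
    rw [← hms]
    field_simp
    ring_nf
    rw [Real.sqrt_sq (hsq j).le]
  have hsumv2 : ∑ y, v y * v y = ∑ y, πQ y := by
    apply Finset.sum_congr rfl
    intro y _
    exact Real.mul_self_sqrt (hπQ y).le
  have hBsv : Bs.mulVec v = v := by
    funext x
    calc Bs.mulVec v x = ∑ y, Bs x y * v y := rfl
      _ = ∑ y, (e * v x) * (v y * v y) := by
          apply Finset.sum_congr rfl; intro y _; rw [hBsapp]; ring
      _ = (e * v x) * ∑ y, v y * v y := by rw [Finset.mul_sum]
      _ = v x * (e * ∑ y, πQ y) := by rw [hsumv2]; ring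
      _ = v x := by rw [hesum, mul_one]
  -- powers
  have hpow : ∀ M : ℕ, dSq πQ * Q ^ M * dSqInv πQ = S0 ^ M := by
    intro M
    induction M with
    | zero => rw [pow_zero, pow_zero, Matrix.mul_one, dSq_dSqInv hπQ]
    | succ M ih =>
      rw [pow_succ, pow_succ, ← ih, hS0def]
      calc dSq πQ * (Q ^ M * Q) * dSqInv πQ
          = dSq πQ * Q ^ M * ((dSqInv πQ * dSq πQ) * (Q * dSqInv πQ)) := by
            rw [dSqInv_dSq hπQ, Matrix.one_mul]; simp only [Matrix.mul_assoc]
        _ = dSq πQ * Q ^ M * dSqInv πQ * (dSq πQ * Q * dSqInv πQ) := by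
            simp only [Matrix.mul_assoc]
  set T : Matrix (Fin n) (Fin n) ℝ := S0 ^ N - Bs with hTdef
  have hTeq : dSq πQ * (Q ^ N - B) * dSqInv πQ = T := by
    rw [hTdef, Matrix.mul_sub, Matrix.sub_mul, hpow N, hBsdef]
  -- determinant chain : det (t·1 - S0) = ∏ (t - lam j)
  have hQconj : Q = Λ⁻¹ * P * Λ := by
    rw [Matrix.mul_assoc, hint, ← Matrix.mul_assoc, hΛinv, Matrix.one_mul]
  have hdetchain : ∀ t : ℝ, (Matrix.diagonal (fun _ : Fin n => t) - S0).det
      = ∏ j, (t - lam j) := by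
    intro t
    set D : Matrix (Fin n) (Fin n) ℝ := Matrix.diagonal (fun _ : Fin n => t) with hD
    have hDsmul : D = t • (1 : Matrix (Fin n) (Fin n) ℝ) := by
      rw [hD, Matrix.smul_one_eq_diagonal]
    have e0 : dSq πQ * D * dSqInv πQ = D := by
      apply Matrix.ext
      intro a b
      rw [dSq, dSqInv, Matrix.mul_diagonal, Matrix.diagonal_mul]
      by_cases hab : a = b
      · subst hab
        rw [hD, Matrix.diagonal_apply_eq]
        rw [mul_comm (Real.sqrt (πQ a)) t, mul_assoc, mul_inv_cancel₀ (hsq a).ne', mul_one]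
      · rw [hD, Matrix.diagonal_apply_ne _ hab, mul_zero, zero_mul]
    have e1 : D - S0 = dSq πQ * (D - Q) * dSqInv πQ := by
      rw [Matrix.mul_sub, Matrix.sub_mul, hS0def, e0]
    have e2 : D - Q = Λ⁻¹ * (D - P) * Λ := by
      rw [Matrix.mul_sub, Matrix.sub_mul, hQconj]
      congr 1
      rw [hDsmul, Matrix.mul_smul, Matrix.mul_one, Matrix.smul_mul, hΛinv]
    have d1 : (dSq πQ).det * (dSqInv πQ).det = 1 := by
      rw [← Matrix.det_mul, dSq_dSqInv hπQ, Matrix.det_one]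
    have d2 : (Λ⁻¹).det * Λ.det = 1 := by
      rw [← Matrix.det_mul, hΛinv, Matrix.det_one]
    have e3 : (D - S0).det = (D - Q).det := by
      rw [e1, Matrix.det_mul, Matrix.det_mul]
      calc (dSq πQ).det * (D - Q).det * (dSqInv πQ).det
          = (D - Q).det * ((dSq πQ).det * (dSqInv πQ).det) := by ring
        _ = (D - Q).det := by rw [d1, mul_one]
    have e4 : (D - Q).det = (D - P).det := by
      rw [e2, Matrix.det_mul, Matrix.det_mul]
      calc (Λ⁻¹).det * (D - P).det * Λ.det
          = (D - P).det * ((Λ⁻¹).det * Λ.det) := by ring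
        _ = (D - P).det := by rw [d2, mul_one]
    have e5 : (D - P).det = ∏ j, (t - lam j) := by
      rw [← eval_charpoly', hchar]
      rw [Polynomial.eval_prod]
      apply Finset.prod_congr rfl
      intro j _
      rw [Polynomial.eval_sub, Polynomial.eval_X, Polynomial.eval_C]
    rw [e3, e4, e5]
  -- each eigenvalue ≠ 1 of S0 is a lam value ≠ 1
  have hμlam : ∀ i, μ i ≠ 1 → |μ i| ≤ lamStar := by
    intro i hμ1
    have hdet0 : (Matrix.diagonal (fun _ : Fin n => μ i) - S0).det = 0 := by
      rw [← Matrix.exists_mulVec_eq_zero_iff]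
      refine ⟨u i, hu_ne i, ?_⟩
      rw [Matrix.sub_mulVec, hueig i]
      funext x
      rw [_root_.Pi.sub_apply, Matrix.mulVec_diagonal, _root_.Pi.smul_apply, smul_eq_mul,
        _root_.Pi.zero_apply, sub_self]
    rw [hdetchain (μ i)] at hdet0
    obtain ⟨j, _, hj⟩ := Finset.prod_eq_zero_iff.mp hdet0
    have hlamj : lam j = μ i := by linarith [sub_eq_zero.mp hj]
    have : lam j ≠ 1 := by rw [hlamj]; exact hμ1
    rw [← hlamj]
    exact hstar1 j this
  -- eigen-action of T
  set ν : Fin n → ℝ := fun i => if μ i = 1 then 0 else μ i ^ N with hν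
  have hS0pow : ∀ (M : ℕ) (i : Fin n), (S0 ^ M).mulVec (u i) = μ i ^ M • u i := by
    intro M i
    induction M with
    | zero => rw [pow_zero, pow_zero, Matrix.one_mulVec, one_smul]
    | succ M ih =>
      rw [pow_succ, pow_succ, ← Matrix.mulVec_mulVec, hueig i, Matrix.mulVec_smul, ih,
        smul_smul, mul_comm]
  have hTeig : ∀ i, T.mulVec (u i) = ν i • u i := by
    intro i
    by_cases h1 : μ i = 1
    · have hfix : S0.mulVec (u i) = u i := by rw [hueig i, h1, one_smul]
      obtain ⟨ki, hki⟩ := hS0fix (u i) hfix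
      have hBsu : Bs.mulVec (u i) = u i := by
        funext x
        calc Bs.mulVec (u i) x = ∑ y, Bs x y * u i y := rfl
          _ = ∑ y, ki * (Bs x y * v y) := by
              apply Finset.sum_congr rfl; intro y _; rw [hki y]; ring
          _ = ki * ∑ y, Bs x y * v y := by rw [Finset.mul_sum]
          _ = ki * (Bs.mulVec v) x := rfl
          _ = ki * v x := by rw [hBsv]
          _ = u i x := (hki x).symm
      rw [hTdef, Matrix.sub_mulVec, hS0pow N i, h1, one_pow, one_smul, hBsu, sub_self]
      rw [hν]
      simp only [if_pos h1]
      rw [zero_smul]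
    · have hvu : ∑ x, v x * u i x = 0 := by
        have ha : ∑ x, v x * (S0.mulVec (u i)) x = μ i * ∑ x, v x * u i x := by
          rw [hueig i, Finset.mul_sum]
          apply Finset.sum_congr rfl
          intro x _
          rw [_root_.Pi.smul_apply, smul_eq_mul]
          ring
        have hb : ∑ x, v x * (S0.mulVec (u i)) x = ∑ x, v x * u i x := by
          calc ∑ x, v x * (S0.mulVec (u i)) x
              = ∑ x, ∑ y, v x * (S0 x y * u i y) := by
                apply Finset.sum_congr rfl; intro x _
                show v x * (∑ y, S0 x y * u i y) = _
                rw [Finset.mul_sum]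
            _ = ∑ y, ∑ x, v x * (S0 x y * u i y) := Finset.sum_comm
            _ = ∑ y, (∑ x, S0 y x * v x) * u i y := by
                apply Finset.sum_congr rfl; intro y _
                rw [Finset.sum_mul]
                apply Finset.sum_congr rfl; intro x _
                rw [hS0sym x y]; ring
            _ = ∑ y, v y * u i y := by
                apply Finset.sum_congr rfl; intro y _
                have : ∑ x, S0 y x * v x = S0.mulVec v y := rfl
                rw [this, hS0v]
        have : (μ i - 1) * (∑ x, v x * u i x) = 0 := by
          have h2 : μ i * (∑ x, v x * u i x) = ∑ x, v x * u i x := by rw [← ha, hb]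
          linear_combination h2
        rcases mul_eq_zero.mp this with h | h
        · exact absurd (by linarith : μ i = 1) h1
        · exact h
      have hBsu : Bs.mulVec (u i) = 0 := by
        funext x
        calc Bs.mulVec (u i) x = ∑ y, Bs x y * u i y := rfl
          _ = ∑ y, (e * v x) * (v y * u i y) := by
              apply Finset.sum_congr rfl; intro y _; rw [hBsapp]; ring
          _ = (e * v x) * ∑ y, v y * u i y := by rw [Finset.mul_sum]
          _ = 0 := by rw [hvu, mul_zero]
      rw [hTdef, Matrix.sub_mulVec, hS0pow N i, hBsu, sub_zero, hν]
      simp only [if_neg h1]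
  have hνbound : ∀ i, |ν i| ≤ lamStar ^ N := by
    intro i
    rw [hν]
    by_cases h1 : μ i = 1
    · simp only [if_pos h1, abs_zero]
      exact hlsN
    · simp only [if_neg h1]
      rw [abs_pow]
      exact pow_le_pow_left₀ (abs_nonneg _) (hμlam i h1) N
  -- operator norm of T
  have hTnorm : eOpNorm T ≤ lamStar ^ N := by
    apply eOpNorm_le hn
    intro g hg
    obtain ⟨cc, hcc⟩ := exists_coords (hS0herm.eigenvectorBasis) g
    have := spectral_bound T u ν (lamStar ^ N) hlsN horth hTeig hνbound g cc hcc
    rw [hg, mul_one] at this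
    exact this
  -- key intertwining identity
  have hPQm : ∀ M : ℕ, P ^ M * Λ = Λ * Q ^ M := by
    intro M
    induction M with
    | zero => rw [pow_zero, pow_zero, Matrix.one_mul, Matrix.mul_one]
    | succ M ih =>
      rw [pow_succ, pow_succ, Matrix.mul_assoc, hint, ← Matrix.mul_assoc, ih,
        Matrix.mul_assoc]
  have hkey : P ^ N - Pi = Λ * (Q ^ N - B) * Λ⁻¹ := by
    have h1 : Λ * (Q ^ N - B) = (P ^ N - Pi) * Λ := by
      rw [Matrix.mul_sub, Matrix.sub_mul, ← hPQm N, hBdef]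
      congr 1
      calc Λ * (Λ⁻¹ * Pi * Λ) = (Λ * Λ⁻¹) * Pi * Λ := by simp only [Matrix.mul_assoc]
        _ = Pi * Λ := by rw [hΛinv', Matrix.one_mul]
    calc P ^ N - Pi = (P ^ N - Pi) * (Λ * Λ⁻¹) := by rw [hΛinv', Matrix.mul_one]
      _ = (P ^ N - Pi) * Λ * Λ⁻¹ := by simp only [Matrix.mul_assoc]
      _ = Λ * (Q ^ N - B) * Λ⁻¹ := by rw [← h1]
  -- decomposition of the symmetrized matrix
  set A1 : Matrix (Fin n) (Fin n) ℝ := dSq π * Λ * dSqInv πQ with hA1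
  set A2 : Matrix (Fin n) (Fin n) ℝ := dSq πQ * Λ⁻¹ * dSqInv π with hA2
  set M' : Matrix (Fin n) (Fin n) ℝ := dSq π * (P ^ N - Pi) * dSqInv π with hM'
  have hM'dec : M' = A1 * T * A2 := by
    rw [hM', hkey, ← hTeq, hA1, hA2]
    calc dSq π * (Λ * (Q ^ N - B) * Λ⁻¹) * dSqInv π
        = dSq π * Λ * ((dSqInv πQ * dSq πQ) * ((Q ^ N - B) * ((dSqInv πQ * dSq πQ)
            * (Λ⁻¹ * dSqInv π)))) := by
          rw [dSqInv_dSq hπQ]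
          simp only [Matrix.one_mul, Matrix.mul_assoc]
      _ = dSq π * Λ * dSqInv πQ * (dSq πQ * (Q ^ N - B) * dSqInv πQ)
            * (dSq πQ * Λ⁻¹ * dSqInv π) := by simp only [Matrix.mul_assoc]
  -- identification of the three operator norms
  have hwM' : wOpNorm π π (P ^ N - Pi) = eOpNorm M' := wOpNorm_eq_eOpNorm hπ hπ _
  have hwA1 : wOpNorm πQ π Λ = eOpNorm A1 := wOpNorm_eq_eOpNorm hπQ hπ Λ
  have hwA2 : wOpNorm π πQ Λ⁻¹ = eOpNorm A2 := wOpNorm_eq_eOpNorm hπ hπQ Λ⁻¹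
  constructor
  · -- lower bound
    obtain ⟨i, hne1, habs⟩ := hstar2
    have hdet0 : (Matrix.diagonal (fun _ : Fin n => lam i) - P).det = 0 := by
      have h1 : (Matrix.diagonal (fun _ : Fin n => lam i) - P).det
          = (P.charpoly).eval (lam i) := (eval_charpoly' P (lam i)).symm
      rw [h1, hchar, Polynomial.eval_prod]
      apply Finset.prod_eq_zero (Finset.mem_univ i)
      rw [Polynomial.eval_sub, Polynomial.eval_X, Polynomial.eval_C, sub_self]
    obtain ⟨x, hx0, hx⟩ := (Matrix.exists_mulVec_eq_zero_iff).mpr hdet0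
    have hPx : P.mulVec x = lam i • x := by
      funext a
      have := congrFun hx a
      rw [Matrix.sub_mulVec, _root_.Pi.sub_apply, Matrix.mulVec_diagonal,
        _root_.Pi.zero_apply, sub_eq_zero] at this
      rw [_root_.Pi.smul_apply, smul_eq_mul, ← this]
    have hPNx' : ∀ M : ℕ, (P ^ M).mulVec x = lam i ^ M • x := by
      intro M
      induction M with
      | zero => rw [pow_zero, pow_zero, Matrix.one_mulVec, one_smul]
      | succ M ih =>
        rw [pow_succ, pow_succ, ← Matrix.mulVec_mulVec, hPx, Matrix.mulVec_smul, ih,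
          smul_smul, mul_comm]
    have hPNx : (P ^ N).mulVec x = lam i ^ N • x := hPNx' N
    have hπx : ∑ y, π y * x y = 0 := by
      have ha : ∑ a, π a * (P.mulVec x) a = lam i * ∑ y, π y * x y := by
        rw [hPx, Finset.mul_sum]
        apply Finset.sum_congr rfl
        intro a _
        rw [_root_.Pi.smul_apply, smul_eq_mul]
        ring
      have hb : ∑ a, π a * (P.mulVec x) a = ∑ y, π y * x y := by
        calc ∑ a, π a * (P.mulVec x) a = ∑ a, ∑ y, π a * (P a y * x y) := by
              apply Finset.sum_congr rfl; intro a _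
              show π a * (∑ y, P a y * x y) = _
              rw [Finset.mul_sum]
          _ = ∑ y, ∑ a, π a * (P a y * x y) := Finset.sum_comm
          _ = ∑ y, (∑ a, π a * P a y) * x y := by
              apply Finset.sum_congr rfl; intro y _
              rw [Finset.sum_mul]
              apply Finset.sum_congr rfl; intro a _
              ring
          _ = ∑ y, π y * x y := by
              apply Finset.sum_congr rfl; intro y _
              rw [hstat y]
      have h2 : (lam i - 1) * (∑ y, π y * x y) = 0 := by
        have h3 : lam i * (∑ y, π y * x y) = ∑ y, π y * x y := by rw [← ha, hb]
        linear_combination h3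
      rcases mul_eq_zero.mp h2 with h | h
      · exact absurd (by linarith : lam i = 1) hne1
      · exact h
    have hPix : Pi.mulVec x = 0 := by
      funext a
      calc Pi.mulVec x a = ∑ y, Pi a y * x y := rfl
        _ = ∑ y, π y * x y := by
            apply Finset.sum_congr rfl; intro y _; rw [hPiapp]
        _ = 0 := hπx
    have hsub : (P ^ N - Pi).mulVec x = lam i ^ N • x := by
      rw [Matrix.sub_mulVec, hPNx, hPix, sub_zero]
    set y : Fin n → ℝ := (dSq π).mulVec x with hy
    have hy0 : y ≠ 0 := by
      intro h0
      apply hx0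
      have := dSqInv_mulVec_dSq hπ x
      rw [← hy] at this
      rw [← this, h0, Matrix.mulVec_zero]
    have hM'y : M'.mulVec y = lam i ^ N • y := by
      rw [hM', hy, ← Matrix.mulVec_mulVec, ← Matrix.mulVec_mulVec,
        dSqInv_mulVec_dSq hπ, hsub, Matrix.mulVec_smul]
    have := abs_eig_le_eOpNorm M' hy0 hM'y
    rw [abs_pow, habs] at this
    rw [hwM']
    exact this
  · -- upper bound
    rw [hwM', hκ, hwA1, hwA2, hM'dec]
    calc eOpNorm (A1 * T * A2) ≤ eOpNorm (A1 * T) * eOpNorm A2 := eOpNorm_mul_le hn _ _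
      _ ≤ (eOpNorm A1 * eOpNorm T) * eOpNorm A2 :=
          mul_le_mul_of_nonneg_right (eOpNorm_mul_le hn _ _) (eOpNorm_nonneg hn _)
      _ ≤ (eOpNorm A1 * lamStar ^ N) * eOpNorm A2 := by
          apply mul_le_mul_of_nonneg_right _ (eOpNorm_nonneg hn _)
          exact mul_le_mul_of_nonneg_left hTnorm (eOpNorm_nonneg hn _)
      _ = eOpNorm A1 * eOpNorm A2 * lamStar ^ N := by ring
end
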